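/- arXiv:2401.02947 — 3 statements merged into one kernel-verified Lean document; each statement's English description precedes it below -/
import Mathlib

section
/- Let D be a triangulated category, (X, Y) a t-structure on D with heart H = X ∩ Y[1], and (T, F) a torsion pair in H. Then the pair (X * T[-1], (F * Y)[-1]) is again a t-structure on D, whose heart equals F * T[-1]. -/
open CategoryTheory Category Limits Pretriangulated

universe v u

namespace SMPaper

variable {C : Type u} [Category.{v} C] [Preadditive C] [HasZeroObject C] [HasShift C ℤ]
  [∀ n : ℤ, (shiftFunctor C n).Additive] [Pretriangulated C]

/-- The image of a set of objects under the `n`-th shift, closed under isomorphism. -/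
def shiftSet (S : Set C) (n : ℤ) : Set C :=
  {d | ∃ s ∈ S, Nonempty ((shiftFunctor C n).obj s ≅ d)}

/-- The extension product `A * B`: objects `d` fitting in a triangle `a → d → b → a[1]`. -/
def star (A B : Set C) : Set C :=
  {d | ∃ (a b : C) (f : a ⟶ d) (g : d ⟶ b) (h : b ⟶ (shiftFunctor C (1 : ℤ)).obj a),
    a ∈ A ∧ b ∈ B ∧ Triangle.mk f g h ∈ (distTriang C)}

/-- `Hom(A, B) = 0`. -/
def homOrth (A B : Set C) : Prop :=
  ∀ ⦃a : C⦄, a ∈ A → ∀ ⦃b : C⦄, b ∈ B → ∀ f : a ⟶ b, f = 0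

/-- Right perpendicular `S^⊥`. -/
def rPerp (S : Set C) : Set C := {d | ∀ s ∈ S, ∀ f : s ⟶ d, f = 0}

/-- Left perpendicular `^⊥S`. -/
def lPerp (S : Set C) : Set C := {d | ∀ s ∈ S, ∀ f : d ⟶ s, f = 0}

def isoClosure (S : Set C) : Set C := {d | ∃ s ∈ S, Nonempty (s ≅ d)}

/-- The extension closure of a set of objects. -/
inductive ExtClosureP (S : Set C) : C → Prop
  | of (s : C) : s ∈ S → ExtClosureP S s
  | zero (z : C) : IsZero z → ExtClosureP S z
  | iso (x y : C) : (x ≅ y) → ExtClosureP S x → ExtClosureP S y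
  | ext (a d b : C) (f : a ⟶ d) (g : d ⟶ b) (h : b ⟶ (shiftFunctor C (1 : ℤ)).obj a) :
      Triangle.mk f g h ∈ (distTriang C) → ExtClosureP S a → ExtClosureP S b → ExtClosureP S d

def extClosure (S : Set C) : Set C := {d | ExtClosureP S d}

/-- `⟨S⟩[i] * ⟨S⟩[i-1] * ⋯ * ⟨S⟩[i-n]`. -/
def prodDown (S : Set C) : ℤ → ℕ → Set C
  | i, 0 => shiftSet (extClosure S) i
  | i, n + 1 => star (shiftSet (extClosure S) i) (prodDown S (i - 1) n)

/-- `susp S = ⋃_{n ≥ 0} ⟨S⟩[n] * ⋯ * ⟨S⟩[0]`. -/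
def suspSet (S : Set C) : Set C := {d | ∃ n : ℕ, d ∈ prodDown S n n}

/-- `cosusp S = ⋃_{n ≥ 0} ⟨S⟩[0] * ⋯ * ⟨S⟩[-n]`. -/
def cosuspSet (S : Set C) : Set C := {d | ∃ n : ℕ, d ∈ prodDown S 0 n}

/-- `cosusp (S[-1]) = ⋃_{n ≥ 0} ⟨S⟩[-1] * ⋯ * ⟨S⟩[-1-n]`. -/
def cosuspNeg (S : Set C) : Set C := {d | ∃ n : ℕ, d ∈ prodDown S (-1) n}

/-- A t-structure `(X, Y)`: full (iso-closed, containing zero) subcategories with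
`Hom(X, Y) = 0`, `D = X * Y` and `X[1] ⊆ X`. -/
structure IsTStructure (X Y : Set C) : Prop where
  isoX : ∀ ⦃x y : C⦄, (x ≅ y) → x ∈ X → y ∈ X
  isoY : ∀ ⦃x y : C⦄, (x ≅ y) → x ∈ Y → y ∈ Y
  zeroX : ∀ z : C, IsZero z → z ∈ X
  zeroY : ∀ z : C, IsZero z → z ∈ Y
  hom : homOrth X Y
  gen : ∀ d : C, d ∈ star X Y
  shift : shiftSet X 1 ⊆ X

/-- A co-t-structure `(W, X)`. -/
structure IsCoTStructure (W X : Set C) : Prop where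
  isoW : ∀ ⦃x y : C⦄, (x ≅ y) → x ∈ W → y ∈ W
  isoX : ∀ ⦃x y : C⦄, (x ≅ y) → x ∈ X → y ∈ X
  zeroW : ∀ z : C, IsZero z → z ∈ W
  zeroX : ∀ z : C, IsZero z → z ∈ X
  hom : homOrth W X
  gen : ∀ d : C, d ∈ star W X
  shift : shiftSet W (-1) ⊆ W

/-- The heart `X ∩ Y[1]` of a t-structure. -/
def heart (X Y : Set C) : Set C := X ∩ shiftSet Y 1

/-- Boundedness of a torsion pair/t-structure. -/
def IsBoundedTS (X Y : Set C) : Prop :=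
  ∀ d : C, (∃ n : ℤ, d ∈ shiftSet X n) ∧ (∃ n : ℤ, d ∈ shiftSet Y n)

/-- A torsion pair `(T, F)` in the heart `H`: `Hom(T, F) = 0` and every object of `H`
is an extension of an object of `F` by an object of `T`. -/
structure IsTorsionPairIn (H T F : Set C) : Prop where
  isoT : ∀ ⦃x y : C⦄, (x ≅ y) → x ∈ T → y ∈ T
  isoF : ∀ ⦃x y : C⦄, (x ≅ y) → x ∈ F → y ∈ F
  subT : T ⊆ H
  subF : F ⊆ H
  hom : homOrth T F
  gen : H ⊆ star T F

/-- `f : x → d` is a right `S`-approximation. -/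
def IsRightApprox (S : Set C) {x d : C} (f : x ⟶ d) : Prop :=
  x ∈ S ∧ ∀ ⦃x' : C⦄, x' ∈ S → ∀ g : x' ⟶ d, ∃ h : x' ⟶ x, h ≫ f = g

/-- `f : d → x` is a left `S`-approximation. -/
def IsLeftApprox (S : Set C) {d x : C} (f : d ⟶ x) : Prop :=
  x ∈ S ∧ ∀ ⦃x' : C⦄, x' ∈ S → ∀ g : d ⟶ x', ∃ h : x ⟶ x', f ≫ h = g

def RightMinimal {x d : C} (f : x ⟶ d) : Prop :=
  ∀ β : x ⟶ x, β ≫ f = f → IsIso β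

def LeftMinimal {d x : C} (f : d ⟶ x) : Prop :=
  ∀ β : x ⟶ x, f ≫ β = f → IsIso β

def HasRightApprox (S : Set C) (d : C) : Prop := ∃ (x : C) (f : x ⟶ d), IsRightApprox S f

def HasLeftApprox (S : Set C) (d : C) : Prop := ∃ (x : C) (f : d ⟶ x), IsLeftApprox S f

def ContravariantlyFiniteIn (S A : Set C) : Prop := ∀ d ∈ A, HasRightApprox S d

def CovariantlyFiniteIn (S A : Set C) : Prop := ∀ d ∈ A, HasLeftApprox S d

/-- An orthogonal collection (semibrick). -/
structure IsOrthogonal (U : Set C) : Prop where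
  nonzero : ∀ u ∈ U, ¬ IsZero u
  hom : ∀ ⦃u v : C⦄, u ∈ U → v ∈ U → ¬ Nonempty (u ≅ v) → ∀ f : u ⟶ v, f = 0
  div : ∀ u ∈ U, ∀ f : u ⟶ u, f = 0 ∨ IsIso f

/-- An `∞`-orthogonal collection. -/
def IsInfOrthogonal (U : Set C) : Prop :=
  IsOrthogonal U ∧ ∀ ⦃u v : C⦄, u ∈ U → v ∈ U → ∀ m : ℤ, 0 < m →
    ∀ f : (shiftFunctor C m).obj u ⟶ v, f = 0

/-- A simple-minded collection. -/
def IsSMC (U : Set C) : Prop :=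
  IsInfOrthogonal U ∧ ∀ d : C, ∃ i j : ℤ, j ≤ i ∧ d ∈ prodDown U i (i - j).toNat

/-- `m` is a right mutation `∂_S(d)` of `d` with respect to `S`. -/
def IsRightMutation (S : Set C) (d m : C) : Prop :=
  (d ∈ S ∧ Nonempty (d ≅ m)) ∨
  (d ∉ S ∧ ∃ (s : C) (f : s ⟶ (shiftFunctor C (1 : ℤ)).obj d)
      (g : (shiftFunctor C (1 : ℤ)).obj d ⟶ m) (h : m ⟶ (shiftFunctor C (1 : ℤ)).obj s),
    IsRightApprox (extClosure S) f ∧ RightMinimal f ∧ Triangle.mk f g h ∈ (distTriang C))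

/-- `m` is a left mutation `∂⁻_S(d)` of `d` with respect to `S`. -/
def IsLeftMutation (S : Set C) (d m : C) : Prop :=
  (d ∈ S ∧ Nonempty (d ≅ m)) ∨
  (d ∉ S ∧ ∃ (s : C) (g : m ⟶ (shiftFunctor C (-1 : ℤ)).obj d)
      (f : (shiftFunctor C (-1 : ℤ)).obj d ⟶ s) (h : s ⟶ (shiftFunctor C (1 : ℤ)).obj m),
    IsLeftApprox (extClosure S) f ∧ LeftMinimal f ∧ Triangle.mk g f h ∈ (distTriang C))

def rightMutationSet (S U : Set C) : Set C := {m | ∃ u ∈ U, IsRightMutation S u m}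

def leftMutationSet (S U : Set C) : Set C := {m | ∃ u ∈ U, IsLeftMutation S u m}

/-- `h` is a simple object of the heart `H`. -/
def IsSimpleIn (H : Set C) (h : C) : Prop :=
  h ∈ H ∧ ¬ IsZero h ∧
    ∀ (a b : C) (f : a ⟶ h) (g : h ⟶ b) (w : b ⟶ (shiftFunctor C (1 : ℤ)).obj a),
      a ∈ H → b ∈ H → Triangle.mk f g w ∈ (distTriang C) → IsZero a ∨ IsZero b

def simplesOf (H : Set C) : Set C := {h | IsSimpleIn H h}

/-- A heart is a length category iff every object has a finite composition series, i.e.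
lies in the extension closure of the simple objects. -/
def HeartIsLength (H : Set C) : Prop := H ⊆ extClosure (simplesOf H)

/-- A bounded t-structure with length heart. -/
def IsLengthHeart (X Y : Set C) : Prop :=
  IsTStructure X Y ∧ IsBoundedTS X Y ∧ HeartIsLength (heart X Y)

/-- An `S`-mutation pair `(A, B)`. -/
def IsSMutationPair (S A B : Set C) : Prop :=
  isoClosure A =
    lPerp S ∩ rPerp S ∩ lPerp (shiftSet S (-1)) ∩ shiftSet (star (extClosure S) B) (-1) ∧
  isoClosure B =
    lPerp S ∩ rPerp S ∩ rPerp (shiftSet S 1) ∩ shiftSet (star A (extClosure S)) 1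

/-- The conditions of the SMC Setup. -/
def SMCSetup (S : Set C) : Prop :=
  CovariantlyFiniteIn (extClosure S)
    {d | ∀ s ∈ S, ∀ m : ℤ, m < 0 → ∀ f : d ⟶ (shiftFunctor C m).obj s, f = 0} ∧
  ContravariantlyFiniteIn (extClosure S)
    {d | ∀ s ∈ S, ∀ m : ℤ, 0 < m → ∀ f : (shiftFunctor C m).obj s ⟶ d, f = 0} ∧
  (∀ d : C, ∃ N : ℤ, ∀ m : ℤ, m ≤ N → ∀ s ∈ S, ∀ f : d ⟶ (shiftFunctor C m).obj s, f = 0) ∧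
  (∀ d : C, ∃ N : ℤ, ∀ m : ℤ, N ≤ m → ∀ s ∈ S, ∀ f : (shiftFunctor C m).obj s ⟶ d, f = 0)

/-- `f : p → h` is an epimorphism in the heart `H`, i.e. fits in a triangle
`a → p → h → a[1]` with `a ∈ H`. -/
def IsEpiIn (H : Set C) {p h : C} (f : p ⟶ h) : Prop :=
  ∃ (a : C) (i : a ⟶ p) (w : h ⟶ (shiftFunctor C (1 : ℤ)).obj a),
    a ∈ H ∧ Triangle.mk i f w ∈ (distTriang C)

/-- `f : h → i` is a monomorphism in the heart `H`. -/
def IsMonoIn (H : Set C) {h i : C} (f : h ⟶ i) : Prop :=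
  ∃ (b : C) (q : i ⟶ b) (w : b ⟶ (shiftFunctor C (1 : ℤ)).obj h),
    b ∈ H ∧ Triangle.mk f q w ∈ (distTriang C)

def IsProjectiveIn (H : Set C) (p : C) : Prop :=
  p ∈ H ∧ ∀ ⦃x y : C⦄ (f : x ⟶ y), x ∈ H → y ∈ H → IsEpiIn H f →
    ∀ g : p ⟶ y, ∃ l : p ⟶ x, l ≫ f = g

def IsInjectiveIn (H : Set C) (i : C) : Prop :=
  i ∈ H ∧ ∀ ⦃x y : C⦄ (f : x ⟶ y), x ∈ H → y ∈ H → IsMonoIn H f →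
    ∀ g : x ⟶ i, ∃ l : y ⟶ i, f ≫ l = g

def EnoughProjectivesIn (H : Set C) : Prop :=
  ∀ h ∈ H, ∃ (p : C) (f : p ⟶ h), IsProjectiveIn H p ∧ IsEpiIn H f

def EnoughInjectivesIn (H : Set C) : Prop :=
  ∀ h ∈ H, ∃ (i : C) (f : h ⟶ i), IsInjectiveIn H i ∧ IsMonoIn H f



/-! ### Auxiliary lemmas for the proof of `hrs_tilt_is_tstructure` -/

section HRSAux

set_option linter.unusedSectionVars false

/-- All maps from `a` to `b` vanish. -/
def ZH (a b : C) : Prop := ∀ f : a ⟶ b, f = 0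

lemma zh_iso_left {a a' b : C} (e : a ≅ a') (h : ZH a b) : ZH a' b := by
  intro f
  have h2 := h (e.hom ≫ f)
  rw [← id_comp f, ← e.inv_hom_id, assoc, h2, comp_zero]

lemma zh_iso_right {a b b' : C} (e : b ≅ b') (h : ZH a b) : ZH a b' := by
  intro f
  have h2 := h (f ≫ e.inv)
  rw [← comp_id f, ← e.inv_hom_id, ← assoc, h2, zero_comp]

lemma zh_shift {a b : C} (n : ℤ) (h : ZH a b) : ZH (a⟦n⟧) (b⟦n⟧) := by
  intro f
  obtain ⟨g, rfl⟩ := (shiftFunctor C n).map_surjective f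
  rw [h g, Functor.map_zero]

/-- `a⟦1⟧⟦-1⟧ ≅ a`. -/
noncomputable def sIso (a : C) : a⟦(1:ℤ)⟧⟦(-1:ℤ)⟧ ≅ a :=
  (shiftFunctorCompIsoId C (1:ℤ) (-1:ℤ) (by ring)).app a

/-- `a⟦-1⟧⟦1⟧ ≅ a`. -/
noncomputable def sIso' (a : C) : a⟦(-1:ℤ)⟧⟦(1:ℤ)⟧ ≅ a :=
  (shiftFunctorCompIsoId C (-1:ℤ) (1:ℤ) (by ring)).app a

lemma zh_neg_right {a b : C} (h : ZH (a⟦(1:ℤ)⟧) b) : ZH a (b⟦(-1:ℤ)⟧) := by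
  intro f
  have h2 : (shiftFunctor C (1:ℤ)).map f ≫ (sIso' b).hom = 0 := h _
  have h3 : (shiftFunctor C (1:ℤ)).map f = 0 := by
    rw [← comp_id ((shiftFunctor C (1:ℤ)).map f), ← (sIso' b).hom_inv_id, ← assoc, h2, zero_comp]
  apply (shiftFunctor C (1:ℤ)).map_injective
  rw [h3, Functor.map_zero]

lemma zh_neg_right' {a b : C} (h : ZH a (b⟦(-1:ℤ)⟧)) : ZH (a⟦(1:ℤ)⟧) b := by
  intro f
  have h2 : (sIso a).inv ≫ (shiftFunctor C (-1:ℤ)).map f = 0 := h _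
  have h3 : (shiftFunctor C (-1:ℤ)).map f = 0 := by
    rw [← id_comp ((shiftFunctor C (-1:ℤ)).map f), ← (sIso a).hom_inv_id, assoc, h2, comp_zero]
  apply (shiftFunctor C (-1:ℤ)).map_injective
  rw [h3, Functor.map_zero]

lemma comp_zh {a b c : C} (h : ZH b c) (f : a ⟶ b) (g : b ⟶ c) : f ≫ g = 0 := by
  rw [h g, comp_zero]

lemma zh_comp_all {a b c : C} (h : ZH a c) (f : a ⟶ b) (g : b ⟶ c) : f ≫ g = 0 := h _

lemma zh_tri₂ {T : Triangle C} (hT : T ∈ distTriang C) {V : C}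
    (h1 : ZH V T.obj₁) (h3 : ZH V T.obj₃) : ZH V T.obj₂ := by
  intro f
  obtain ⟨g, rfl⟩ := Triangle.coyoneda_exact₂ T hT f (h3 _)
  rw [h1 g, zero_comp]

lemma zh_tri₂' {T : Triangle C} (hT : T ∈ distTriang C) {V : C}
    (h1 : ZH T.obj₁ V) (h3 : ZH T.obj₃ V) : ZH T.obj₂ V := by
  intro f
  obtain ⟨g, rfl⟩ := Triangle.yoneda_exact₂ T hT f (h1 _)
  rw [h3 g, comp_zero]

lemma isZero_of_shift_isZero {a : C} (n : ℤ) (h : IsZero (a⟦n⟧)) : IsZero a := by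
  rw [IsZero.iff_id_eq_zero] at h ⊢
  apply (shiftFunctor C n).map_injective
  rw [CategoryTheory.Functor.map_id, Functor.map_zero, h]

lemma isZero₁_of_mor₁_zero {T : Triangle C} (hT : T ∈ distTriang C)
    (hv : ZH (T.obj₁⟦(1:ℤ)⟧) T.obj₃) (h : T.mor₁ = 0) : IsZero T.obj₁ := by
  apply isZero_of_shift_isZero (1:ℤ)
  rw [IsZero.iff_id_eq_zero]
  obtain ⟨g, hg⟩ := Triangle.coyoneda_exact₃ T.rotate (rot_of_distTriang T hT)
    (𝟙 (T.obj₁⟦(1:ℤ)⟧)) (by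
      dsimp [Triangle.rotate]
      rw [h, Functor.map_zero, neg_zero, ]; exact comp_zero)
  rw [hg, hv g]; exact zero_comp

lemma isZero₃_of_mor₂_zero {T : Triangle C} (hT : T ∈ distTriang C)
    (hv : ZH (T.obj₁⟦(1:ℤ)⟧) T.obj₃) (h : T.mor₂ = 0) : IsZero T.obj₃ := by
  rw [IsZero.iff_id_eq_zero]
  obtain ⟨g, hg⟩ := Triangle.yoneda_exact₃ T hT (𝟙 T.obj₃) (by rw [comp_id, h])
  rw [hg, hv g, comp_zero]

lemma dist_iso₂ {T : Triangle C} (hT : T ∈ distTriang C) {Z : C} (e : T.obj₂ ≅ Z) :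
    Triangle.mk (T.mor₁ ≫ e.hom) (e.inv ≫ T.mor₂) T.mor₃ ∈ distTriang C := by
  refine isomorphic_distinguished _ hT _ ?_
  exact Triangle.isoMk _ _ (Iso.refl _) e.symm (Iso.refl _) (by erw [assoc, e.hom_inv_id, comp_id, id_comp]) (comp_id _) (by erw [CategoryTheory.Functor.map_id, comp_id, id_comp]; exact rfl)

lemma contractible_to_zero {x z : C} (hz : IsZero z) :
    Triangle.mk (𝟙 x) (0 : x ⟶ z) (0 : z ⟶ x⟦(1:ℤ)⟧) ∈ distTriang C := by
  refine isomorphic_distinguished _ (contractible_distinguished x) _ ?_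
  refine Triangle.isoMk _ _ (Iso.refl _) (Iso.refl _) hz.isoZero ?_ ?_ ?_
  · exact (comp_id _).trans (id_comp _).symm
  · exact (Limits.isZero_zero C).eq_of_tgt _ _
  · exact hz.eq_of_src _ _

lemma zero_triangle {a b c : C} (ha : IsZero a) (hb : IsZero b) (hc : IsZero c) :
    Triangle.mk (0 : a ⟶ b) (0 : b ⟶ c) (0 : c ⟶ a⟦(1:ℤ)⟧) ∈ distTriang C := by
  refine isomorphic_distinguished _ (contractible_distinguished a) _ ?_
  refine Triangle.isoMk _ _ (Iso.refl _) (ha.iso hb).symm hc.isoZero ?_ ?_ ?_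
  · exact ha.eq_of_src _ _
  · exact hb.eq_of_src _ _
  · exact hc.eq_of_src _ _

lemma star_iso {A B : Set C} {d d' : C} (e : d ≅ d') (h : d ∈ star A B) : d' ∈ star A B := by
  obtain ⟨a, b, f, g, w, haA, hbB, hT⟩ := h
  exact ⟨a, b, f ≫ e.hom, e.inv ≫ g, w, haA, hbB, dist_iso₂ hT e⟩

lemma shiftSet_iso {S : Set C} {n : ℤ} {d d' : C} (e : d ≅ d') (h : d ∈ shiftSet S n) :
    d' ∈ shiftSet S n := by
  obtain ⟨s, hs, ⟨e'⟩⟩ := h; exact ⟨s, hs, ⟨e'.trans e⟩⟩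

lemma mem_shiftSet_self {S : Set C} {s : C} (hs : s ∈ S) (n : ℤ) : s⟦n⟧ ∈ shiftSet S n :=
  ⟨s, hs, ⟨Iso.refl _⟩⟩

end HRSAux

section HRSAux2

set_option linter.unusedSectionVars false

variable {X Y T F : Set C}

lemma X_shift1 (hXY : IsTStructure X Y) {x : C} (hx : x ∈ X) : x⟦(1:ℤ)⟧ ∈ X :=
  hXY.shift (mem_shiftSet_self hx 1)

lemma zh_XY (hXY : IsTStructure X Y) {x y : C} (hx : x ∈ X) (hy : y ∈ Y) : ZH x y :=
  fun f => hXY.hom hx hy f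

lemma mem_Y_of_perp (hXY : IsTStructure X Y) {d : C} (h : ∀ x ∈ X, ZH x d) : d ∈ Y := by
  obtain ⟨a, b, f, g, w, ha, hb, hT⟩ := hXY.gen d
  have hz : IsZero a :=
    isZero₁_of_mor₁_zero hT (zh_XY hXY (X_shift1 hXY ha) hb) (h a ha f)
  have : IsIso g := (Triangle.isZero₁_iff_isIso₂ _ hT).1 hz
  exact hXY.isoY (asIso g).symm hb

lemma mem_X_of_perp (hXY : IsTStructure X Y) {d : C} (h : ∀ y ∈ Y, ZH d y) : d ∈ X := by
  obtain ⟨a, b, f, g, w, ha, hb, hT⟩ := hXY.gen d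
  have hz : IsZero b :=
    isZero₃_of_mor₂_zero hT (zh_XY hXY (X_shift1 hXY ha) hb) (h b hb g)
  have : IsIso f := (Triangle.isZero₃_iff_isIso₁ _ hT).1 hz
  exact hXY.isoX (asIso f) ha

lemma zh_X1_heart (hXY : IsTStructure X Y) {x h : C} (hx : x ∈ X) (hh : h ∈ heart X Y) :
    ZH (x⟦(1:ℤ)⟧) h := by
  obtain ⟨y, hy, ⟨e⟩⟩ := hh.2
  exact zh_iso_right e (zh_shift 1 (zh_XY hXY hx hy))

lemma heart_shiftneg_mem_Y (hXY : IsTStructure X Y) {h : C} (hh : h ∈ heart X Y) :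
    h⟦(-1:ℤ)⟧ ∈ Y := by
  obtain ⟨y, hy, ⟨e⟩⟩ := hh.2
  exact hXY.isoY ((sIso y).symm.trans ((shiftFunctor C (-1:ℤ)).mapIso e)) hy

lemma heart_of_decomp (hXY : IsTStructure X Y) {a z b : C} {f : a ⟶ z} {g : z ⟶ b}
    {w : b ⟶ a⟦(1:ℤ)⟧} (hT : Triangle.mk f g w ∈ distTriang C) (ha : a ∈ X) (hb : b ∈ Y)
    (hz : z ∈ shiftSet Y 1) : a ∈ heart X Y := by
  refine ⟨ha, a⟦(-1:ℤ)⟧, ?_, ⟨sIso' a⟩⟩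
  refine mem_Y_of_perp hXY (fun x hx => zh_neg_right ?_)
  have h1 : ZH (x⟦(1:ℤ)⟧) (b⟦(-1:ℤ)⟧) :=
    zh_neg_right (zh_XY hXY (X_shift1 hXY (X_shift1 hXY hx)) hb)
  have h3 : ZH (x⟦(1:ℤ)⟧) z := by
    obtain ⟨y, hy, ⟨e⟩⟩ := hz
    exact zh_iso_right e (zh_shift 1 (zh_XY hXY hx hy))
  exact zh_tri₂ (inv_rot_of_distTriang _ hT) h1 h3

lemma tneg_mem_Y (hXY : IsTStructure X Y) (hTF : IsTorsionPairIn (heart X Y) T F)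
    {tm : C} (htm : tm ∈ shiftSet T (-1)) : tm ∈ Y := by
  obtain ⟨th, hth, ⟨e⟩⟩ := htm
  obtain ⟨y, hy, ⟨e2⟩⟩ := (hTF.subT hth).2
  exact hXY.isoY (((sIso y).symm.trans ((shiftFunctor C (-1:ℤ)).mapIso e2)).trans e) hy

lemma tneg_shift_iso {tm : C} (htm : tm ∈ shiftSet T (-1)) :
    ∃ th ∈ T, Nonempty (tm⟦(1:ℤ)⟧ ≅ th) := by
  obtain ⟨th, hth, ⟨e⟩⟩ := htm
  exact ⟨th, hth, ⟨((shiftFunctor C (1:ℤ)).mapIso e).symm.trans (sIso' th)⟩⟩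

lemma mem_T_crit (hXY : IsTStructure X Y) (hTF : IsTorsionPairIn (heart X Y) T F)
    {h : C} (hh : h ∈ heart X Y) (hperp : ∀ f' ∈ F, ZH h f') : h ∈ T := by
  obtain ⟨t0, f0, i, p, w, ht0, hf0, hT⟩ := hTF.gen hh
  have hz : IsZero f0 :=
    isZero₃_of_mor₂_zero hT (zh_X1_heart hXY (hTF.subT ht0).1 (hTF.subF hf0)) (hperp f0 hf0 p)
  have : IsIso i := (Triangle.isZero₃_iff_isIso₁ _ hT).1 hz
  exact hTF.isoT (asIso i) ht0

lemma mem_F_crit (hXY : IsTStructure X Y) (hTF : IsTorsionPairIn (heart X Y) T F)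
    {h : C} (hh : h ∈ heart X Y) (hperp : ∀ t' ∈ T, ZH t' h) : h ∈ F := by
  obtain ⟨t0, f0, i, p, w, ht0, hf0, hT⟩ := hTF.gen hh
  have hz : IsZero t0 :=
    isZero₁_of_mor₁_zero hT (zh_X1_heart hXY (hTF.subT ht0).1 (hTF.subF hf0)) (hperp t0 ht0 i)
  have : IsIso p := (Triangle.isZero₁_iff_isIso₂ _ hT).1 hz
  exact hTF.isoF (asIso p).symm hf0

lemma zero_mem_heart (hXY : IsTStructure X Y) {z : C} (hz : IsZero z) : z ∈ heart X Y :=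
  ⟨hXY.zeroX z hz, ⟨z, hXY.zeroY z hz,
    ⟨(((shiftFunctor C (1:ℤ)).map_isZero hz).iso hz)⟩⟩⟩

lemma zero_mem_T (hXY : IsTStructure X Y) (hTF : IsTorsionPairIn (heart X Y) T F)
    {z : C} (hz : IsZero z) : z ∈ T :=
  mem_T_crit hXY hTF (zero_mem_heart hXY hz) (fun _ _ g => hz.eq_of_src g 0)

lemma zero_mem_F (hXY : IsTStructure X Y) (hTF : IsTorsionPairIn (heart X Y) T F)
    {z : C} (hz : IsZero z) : z ∈ F :=
  mem_F_crit hXY hTF (zero_mem_heart hXY hz) (fun _ _ g => hz.eq_of_tgt g 0)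

lemma x_part_iso (hXY : IsTStructure X Y) {d x₁ y₁ x₂ y₂ : C} {i₁ : x₁ ⟶ d} {p₁ : d ⟶ y₁}
    {w₁ : y₁ ⟶ x₁⟦(1:ℤ)⟧} {i₂ : x₂ ⟶ d} {p₂ : d ⟶ y₂} {w₂ : y₂ ⟶ x₂⟦(1:ℤ)⟧}
    (hT₁ : Triangle.mk i₁ p₁ w₁ ∈ distTriang C) (hT₂ : Triangle.mk i₂ p₂ w₂ ∈ distTriang C)
    (hx₁ : x₁ ∈ X) (hy₁ : y₁ ∈ Y) (hx₂ : x₂ ∈ X) (hy₂ : y₂ ∈ Y) :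
    Nonempty (x₁ ≅ x₂) := by
  obtain ⟨a, ha⟩ := Triangle.coyoneda_exact₂ _ hT₂ i₁ (zh_XY hXY hx₁ hy₂ _)
  obtain ⟨b, hb⟩ := Triangle.coyoneda_exact₂ _ hT₁ i₂ (zh_XY hXY hx₂ hy₁ _)
  change x₁ ⟶ x₂ at a; change x₂ ⟶ x₁ at b; change i₁ = a ≫ i₂ at ha; change i₂ = b ≫ i₁ at hb
  have key : ∀ (u v : C) (hu : u ∈ X) (hv : v ∈ Y) (iu : u ⟶ d) (pv : d ⟶ v)
      (wv : v ⟶ u⟦(1:ℤ)⟧) (hTu : Triangle.mk iu pv wv ∈ distTriang C)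
      (φ : u ⟶ u), φ ≫ iu = iu → φ = 𝟙 u := by
    intro u v hu hv iu pv wv hTu φ hφ
    have h0 : (φ - 𝟙 u) ≫ iu = 0 := by rw [Preadditive.sub_comp, hφ, id_comp, sub_self]
    obtain ⟨c, hc⟩ := Triangle.coyoneda_exact₂ _ (inv_rot_of_distTriang _ hTu) (φ - 𝟙 u) h0
    have hc0 : c = 0 := zh_neg_right (zh_XY hXY (X_shift1 hXY hu) hv) c
    have := hc
    rw [hc0, zero_comp] at this
    exact sub_eq_zero.mp this
  have hab : a ≫ b = 𝟙 x₁ :=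
    key x₁ y₁ hx₁ hy₁ i₁ p₁ w₁ hT₁ (a ≫ b) (by rw [assoc, ← hb, ← ha])
  have hba : b ≫ a = 𝟙 x₂ :=
    key x₂ y₂ hx₂ hy₂ i₂ p₂ w₂ hT₂ (b ≫ a) (by rw [assoc, ← ha, ← hb])
  exact ⟨⟨a, b, hab, hba⟩⟩

end HRSAux2

section HRSAux3

set_option linter.unusedSectionVars false

variable {X Y T F : Set C}

lemma zh_X_E (hXY : IsTStructure X Y) (hTF : IsTorsionPairIn (heart X Y) T F) {x e : C}
    (hx : x ∈ X) (he : e ∈ shiftSet (star F Y) (-1)) : ZH x e := by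
  obtain ⟨ec, hec, ⟨eiso⟩⟩ := he
  obtain ⟨fe, ye, fm, gm, wm, hfe, hye, hTe⟩ := hec
  have h2 : ZH (x⟦(1:ℤ)⟧) ec :=
    zh_tri₂ hTe (zh_X1_heart hXY hx (hTF.subF hfe)) (zh_XY hXY (X_shift1 hXY hx) hye)
  exact zh_iso_right eiso (zh_neg_right h2)

lemma zh_X_Eneg (hXY : IsTStructure X Y) (hTF : IsTorsionPairIn (heart X Y) T F) {x e : C}
    (hx : x ∈ X) (he : e ∈ shiftSet (star F Y) (-1)) : ZH x (e⟦(-1:ℤ)⟧) := by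
  obtain ⟨ec, hec, ⟨eiso⟩⟩ := he
  obtain ⟨fe, ye, fm, gm, wm, hfe, hye, hTe⟩ := hec
  have h2 : ZH (x⟦(1:ℤ)⟧⟦(1:ℤ)⟧) ec :=
    zh_tri₂ hTe (zh_X1_heart hXY (X_shift1 hXY hx) (hTF.subF hfe))
      (zh_XY hXY (X_shift1 hXY (X_shift1 hXY hx)) hye)
  exact zh_iso_right ((shiftFunctor C (-1:ℤ)).mapIso eiso) (zh_neg_right (zh_neg_right h2))

lemma zh_Tneg_E (hXY : IsTStructure X Y) (hTF : IsTorsionPairIn (heart X Y) T F) {tm e : C}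
    (htm : tm ∈ shiftSet T (-1)) (he : e ∈ shiftSet (star F Y) (-1)) : ZH tm e := by
  obtain ⟨th, hth, ⟨et⟩⟩ := htm
  obtain ⟨ec, hec, ⟨eiso⟩⟩ := he
  obtain ⟨fe, ye, fm, gm, wm, hfe, hye, hTe⟩ := hec
  have h2 : ZH th ec :=
    zh_tri₂ hTe (fun φ => hTF.hom hth hfe φ) (zh_XY hXY (hTF.subT hth).1 hye)
  exact zh_iso_left et (zh_iso_right eiso (zh_shift (-1) h2))

lemma X_sub_X' (hXY : IsTStructure X Y) (hTF : IsTorsionPairIn (heart X Y) T F) :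
    X ⊆ star X (shiftSet T (-1)) := by
  intro x hx
  obtain ⟨O, hO⟩ := Limits.HasZeroObject.zero (C := C)
  exact ⟨x, O⟦(-1:ℤ)⟧, 𝟙 x, 0, 0, hx, ⟨O, zero_mem_T hXY hTF hO, ⟨Iso.refl _⟩⟩,
    contractible_to_zero ((shiftFunctor C (-1:ℤ)).map_isZero hO)⟩

lemma homOrth_tilt (hXY : IsTStructure X Y) (hTF : IsTorsionPairIn (heart X Y) T F) :
    homOrth (star X (shiftSet T (-1))) (shiftSet (star F Y) (-1)) := by
  intro d₁ hd₁ d₂ hd₂ f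
  obtain ⟨x, tm, u, pt, wt, hx, htm, hT⟩ := hd₁
  obtain ⟨g, hg⟩ := Triangle.yoneda_exact₂ _ hT f (zh_X_E hXY hTF hx hd₂ _)
  change tm ⟶ d₂ at g; change f = pt ≫ g at hg
  rw [hg, zh_Tneg_E hXY hTF htm hd₂ g, comp_zero]

lemma shift_tilt (hXY : IsTStructure X Y) (hTF : IsTorsionPairIn (heart X Y) T F) :
    shiftSet (star X (shiftSet T (-1))) 1 ⊆ star X (shiftSet T (-1)) := by
  rintro d ⟨s, hs, ⟨e⟩⟩
  obtain ⟨x, tm, u, pt, wt, hx, htm, hT⟩ := hs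
  obtain ⟨th, hth, ⟨etm⟩⟩ := tneg_shift_iso htm
  have hs1 : s⟦(1:ℤ)⟧ ∈ X := by
    refine mem_X_of_perp hXY (fun y'' hy'' => ?_)
    have h1 : ZH (x⟦(1:ℤ)⟧) y'' := zh_XY hXY (X_shift1 hXY hx) hy''
    have h3 : ZH (tm⟦(1:ℤ)⟧) y'' := zh_iso_left etm.symm (zh_XY hXY (hTF.subT hth).1 hy'')
    exact zh_tri₂' (rot_of_distTriang _ (rot_of_distTriang _ (rot_of_distTriang _ hT))) h1 h3
  exact star_iso e (X_sub_X' hXY hTF hs1)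

lemma zero_mem_Y' (hXY : IsTStructure X Y) (hTF : IsTorsionPairIn (heart X Y) T F)
    {z : C} (hz : IsZero z) : z ∈ shiftSet (star F Y) (-1) := by
  have hz1 : IsZero (z⟦(1:ℤ)⟧) := (shiftFunctor C (1:ℤ)).map_isZero hz
  exact ⟨z⟦(1:ℤ)⟧, ⟨z⟦(1:ℤ)⟧, z⟦(1:ℤ)⟧, 0, 0, 0, zero_mem_F hXY hTF hz1,
    hXY.zeroY _ hz1, zero_triangle hz1 hz1 hz1⟩, ⟨sIso z⟩⟩

lemma heart_tilt_sub (hXY : IsTStructure X Y) (hTF : IsTorsionPairIn (heart X Y) T F) :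
    heart (star X (shiftSet T (-1))) (shiftSet (star F Y) (-1)) ⊆
      star F (shiftSet T (-1)) := by
  rintro d ⟨hd1, hd2⟩
  obtain ⟨x, tm, u, pt, wt, hx, htm, hT⟩ := hd1
  obtain ⟨s, hs, ⟨e1⟩⟩ := hd2
  obtain ⟨ec, hec, ⟨e2⟩⟩ := hs
  obtain ⟨fe, ye, fm, gm, wm, hfe, hye, hTe⟩ := hec
  have eD : ec ≅ d := (sIso' ec).symm.trans (((shiftFunctor C (1:ℤ)).mapIso e2).trans e1)
  have hT2 : Triangle.mk (fm ≫ eD.hom) (eD.inv ≫ gm) wm ∈ distTriang C := dist_iso₂ hTe eD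
  obtain ⟨eiso⟩ := x_part_iso hXY hT hT2 hx (tneg_mem_Y hXY hTF htm) (hTF.subF hfe).1 hye
  exact ⟨x, tm, u, pt, wt, hTF.isoF eiso.symm hfe, htm, hT⟩

lemma heart_tilt_sup (hXY : IsTStructure X Y) (hTF : IsTorsionPairIn (heart X Y) T F) :
    star F (shiftSet T (-1)) ⊆
      heart (star X (shiftSet T (-1))) (shiftSet (star F Y) (-1)) := by
  rintro d ⟨fe, tm, fm, gm, wm, hfe, htm, hT⟩
  constructor
  · exact ⟨fe, tm, fm, gm, wm, (hTF.subF hfe).1, htm, hT⟩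
  · exact ⟨d⟦(-1:ℤ)⟧, ⟨d, ⟨fe, tm, fm, gm, wm, hfe, tneg_mem_Y hXY hTF htm, hT⟩,
      ⟨Iso.refl _⟩⟩, ⟨sIso' d⟩⟩

end HRSAux3

section HRSAux4

set_option linter.unusedSectionVars false
set_option maxHeartbeats 1000000

variable {X Y T F : Set C}

lemma stepA (hXY : IsTStructure X Y) (hTF : IsTorsionPairIn (heart X Y) T F) {y : C}
    (hy : y ∈ Y) : y ∈ star (shiftSet T (-1)) (shiftSet (star F Y) (-1)) := by
  classical
  -- decompose y⟦1⟧
  obtain ⟨h, y₂, α, β, γ, hh, hy₂, hT2⟩ := hXY.gen (y⟦(1:ℤ)⟧)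
  have hhH : h ∈ heart X Y := heart_of_decomp hXY hT2 hh hy₂ (mem_shiftSet_self hy 1)
  -- torsion decomposition of h
  obtain ⟨t, f, i, p, w, ht, hf, hT1⟩ := hTF.gen hhH
  have htX : t ∈ X := (hTF.subT ht).1
  have hfH : f ∈ heart X Y := hTF.subF hf
  have hfX : f ∈ X := hfH.1
  -- cone of the composite
  obtain ⟨c, δ, ε, hT3⟩ := distinguished_cocone_triangle (i ≫ α)
  -- q : f ⟶ c
  obtain ⟨q0, hq₁0, _⟩ := complete_distinguished_triangle_morphism
    (Triangle.mk i p w) (Triangle.mk (i ≫ α) δ ε) hT1 hT3 (𝟙 t) α (id_comp _).symm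
  change f ⟶ c at q0
  have hq₁ : p ≫ q0 = α ≫ δ := hq₁0
  -- r : c ⟶ y₂
  obtain ⟨r0, hr₁0, hr₂0⟩ := complete_distinguished_triangle_morphism
    (Triangle.mk (i ≫ α) δ ε) (Triangle.mk α β γ) hT3 hT2 i (𝟙 _) (comp_id _)
  have hr₁ : δ ≫ r0 = 𝟙 (y⟦(1:ℤ)⟧) ≫ β := hr₁0
  have hr₂ : ε ≫ (shiftFunctor C (1:ℤ)).map i = r0 ≫ γ := hr₂0
  rw [id_comp] at hr₁
  -- Hom(t⟦1⟧, c) = 0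
  have hTc : ZH (t⟦(1:ℤ)⟧) c := by
    intro φ
    have h1 : (φ ≫ ε) ≫ (shiftFunctor C (1:ℤ)).map i = 0 := by
      erw [assoc, hr₂, ← assoc, zh_XY hXY (X_shift1 hXY htX) hy₂ (φ ≫ r0), zero_comp]
    obtain ⟨θ0, hθ0⟩ := Triangle.coyoneda_exact₃ (Triangle.mk i p w).rotate
      (rot_of_distTriang _ hT1) (φ ≫ ε) (by
        show (φ ≫ ε) ≫ (-((shiftFunctor C (1:ℤ)).map i)) = 0
        rw [Preadditive.comp_neg, h1, neg_zero])
    have hθ : φ ≫ ε = θ0 ≫ w := hθ0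
    erw [zh_X1_heart hXY htX hfH θ0, zero_comp] at hθ
    obtain ⟨g0, hg0⟩ := Triangle.coyoneda_exact₃ _ hT3 φ hθ
    have hg : φ = g0 ≫ δ := hg0
    erw [hg, zh_shift 1 (zh_XY hXY htX hy) g0, zero_comp]
  -- the comparison object cc ;  m₀ := invRotate(T2).mor₁ : y₂⟦-1⟧ ⟶ h
  obtain ⟨cc, qh, σh, hT6⟩ :=
    distinguished_cocone_triangle ((Triangle.mk α β γ).invRotate.mor₁ ≫ p)
  -- δ' : y⟦1⟧ ⟶ cc
  obtain ⟨δ'0, hδ'₁0, hδ'₂0⟩ := complete_distinguished_triangle_morphism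
    ((Triangle.mk α β γ).invRotate) (Triangle.mk ((Triangle.mk α β γ).invRotate.mor₁ ≫ p) qh σh)
    (inv_rot_of_distTriang _ hT2) hT6 (𝟙 _) p (id_comp _).symm
  have hδ'₁ : α ≫ δ'0 = p ≫ qh := hδ'₁0
  have hδ'₂ : (β ≫ (shiftEquiv C (1:ℤ)).counitIso.inv.app y₂) ≫
      (shiftFunctor C (1:ℤ)).map (𝟙 (y₂⟦(-1:ℤ)⟧)) = δ'0 ≫ σh := hδ'₂0
  -- the fiber of δ'
  obtain ⟨Z, z₁, z₂, hTz⟩ := distinguished_cocone_triangle δ'0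
  have hT5 := inv_rot_of_distTriang _ hTz
  have hjδ' : (Triangle.mk δ'0 z₁ z₂).invRotate.mor₁ ≫ δ'0 = 0 :=
    comp_distTriang_mor_zero₁₂ _ hT5
  set j : Z⟦(-1:ℤ)⟧ ⟶ y⟦(1:ℤ)⟧ := (Triangle.mk δ'0 z₁ z₂).invRotate.mor₁ with hjdef
  have hjβ : j ≫ β = 0 := by
    have h2 : j ≫ ((β ≫ (shiftEquiv C (1:ℤ)).counitIso.inv.app y₂) ≫
        (shiftFunctor C (1:ℤ)).map (𝟙 (y₂⟦(-1:ℤ)⟧))) = 0 := by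
      erw [hδ'₂, ← assoc, hjδ', zero_comp]
    haveI : IsIso ((shiftFunctor C (1:ℤ)).map (𝟙 (y₂⟦(-1:ℤ)⟧))) := by
      have := CategoryTheory.Functor.map_id (shiftFunctor C (1:ℤ)) (y₂⟦(-1:ℤ)⟧)
      rw [this]; infer_instance
    erw [CategoryTheory.Functor.map_id, comp_id, ← assoc] at h2
    erw [Preadditive.IsIso.comp_right_eq_zero (g := (shiftEquiv C (1:ℤ)).counitIso.inv.app y₂)] at h2
    exact h2
  obtain ⟨l0, hl0⟩ := Triangle.coyoneda_exact₂ _ hT2 j hjβ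
  change Z⟦(-1:ℤ)⟧ ⟶ h at l0
  have hl : j = l0 ≫ α := hl0
  -- l ≫ p factors through m₀
  obtain ⟨θ0, hθ0⟩ := Triangle.coyoneda_exact₂ _ hT6 (l0 ≫ p) (by
    show (l0 ≫ p) ≫ qh = 0
    erw [assoc, ← hδ'₁, ← assoc, ← hl, hjδ']; exact rfl)
  have hθ : l0 ≫ p = θ0 ≫ ((Triangle.mk α β γ).invRotate.mor₁ ≫ p) := hθ0
  have hm₀α : (Triangle.mk α β γ).invRotate.mor₁ ≫ α = 0 :=
    comp_distTriang_mor_zero₁₂ _ (inv_rot_of_distTriang _ hT2)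
  have hjδ : j ≫ δ = 0 :=
    calc j ≫ δ = l0 ≫ α ≫ δ := by erw [hl, assoc]
    _ = (l0 ≫ p) ≫ q0 := by erw [← hq₁, assoc]
    _ = θ0 ≫ (Triangle.mk α β γ).invRotate.mor₁ ≫ (p ≫ q0) := by erw [hθ]; exact (assoc _ _ _).trans (congrArg (θ0 ≫ ·) (assoc _ _ _))
    _ = θ0 ≫ ((Triangle.mk α β γ).invRotate.mor₁ ≫ α) ≫ δ := by erw [hq₁]; exact congrArg (θ0 ≫ ·) (assoc _ _ _).symm
    _ = 0 := by erw [hm₀α, zero_comp, comp_zero]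
  -- φ : c ⟶ cc and ψ : cc ⟶ c
  have hip : i ≫ p = 0 := comp_distTriang_mor_zero₁₂ _ hT1
  obtain ⟨φ0, hφ0⟩ := Triangle.yoneda_exact₂ _ hT3 δ'0 (by
    show (i ≫ α) ≫ δ'0 = 0
    erw [assoc, hδ'₁, ← assoc, hip, zero_comp])
  have hφ : δ'0 = δ ≫ φ0 := hφ0
  obtain ⟨ψ0, hψ0⟩ := Triangle.yoneda_exact₂ _ hT5 δ hjδ
  have hψ : δ = δ'0 ≫ ψ0 := hψ0
  have hφψ : (φ0 ≫ ψ0 : c ⟶ c) = 𝟙 c := by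
    have h4 : δ ≫ ((φ0 ≫ ψ0 : c ⟶ c) - 𝟙 c) = 0 := by
      erw [Preadditive.comp_sub, ← assoc, ← hφ, ← hψ, comp_id, sub_self]
    obtain ⟨g0, hg0⟩ := Triangle.yoneda_exact₃ _ hT3 _ h4
    have hg : (φ0 ≫ ψ0 : c ⟶ c) - 𝟙 c = ε ≫ g0 := hg0
    rw [hTc g0, comp_zero] at hg
    exact sub_eq_zero.mp hg
  -- decompose c and transfer the retraction
  obtain ⟨xc, yc, ι, π, wc, hxc, hyc, hTc'⟩ := hXY.gen c
  obtain ⟨a2, ha0⟩ := Triangle.coyoneda_exact₃ _ hT6 (ι ≫ φ0)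
    (zh_iso_right (sIso' y₂).symm (zh_XY hXY hxc hy₂) _)
  change xc ⟶ f at a2
  have ha2 : ι ≫ φ0 = a2 ≫ qh := ha0
  obtain ⟨b2, hb0⟩ := Triangle.coyoneda_exact₂ _ hTc' (qh ≫ ψ0) (by
    show (qh ≫ ψ0) ≫ π = 0
    erw [assoc]; exact zh_XY hXY hfX hyc _)
  change f ⟶ xc at b2
  have hb2 : qh ≫ ψ0 = b2 ≫ ι := hb0
  have hab : (a2 ≫ b2 : xc ⟶ xc) = 𝟙 xc := by
    have h5 : ((a2 ≫ b2 : xc ⟶ xc) - 𝟙 xc) ≫ ι = 0 := by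
      erw [Preadditive.sub_comp, assoc, ← hb2, ← assoc, ← ha2, assoc, hφψ, comp_id, id_comp,
        sub_self]
    obtain ⟨c0, hc0⟩ := Triangle.coyoneda_exact₂ _ (inv_rot_of_distTriang _ hTc') _ h5
    have hc2 : (a2 ≫ b2 : xc ⟶ xc) - 𝟙 xc = c0 ≫ (Triangle.mk ι π wc).invRotate.mor₁ := hc0
    erw [zh_neg_right (zh_XY hXY (X_shift1 hXY hxc) hyc) c0, zero_comp] at hc2
    exact sub_eq_zero.mp hc2
  have hretr : ∀ V : C, ZH V f → ZH V xc := by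
    intro V hV ξ
    have hξ : ξ = (ξ ≫ a2) ≫ b2 := by erw [assoc, hab, comp_id]
    erw [hξ, hV (ξ ≫ a2), zero_comp]
  have hxcH : xc ∈ heart X Y := ⟨hxc, xc⟦(-1:ℤ)⟧, mem_Y_of_perp hXY (fun x' hx' =>
    zh_neg_right (hretr _ (zh_X1_heart hXY hx' hfH))), ⟨sIso' xc⟩⟩
  have hxcF : xc ∈ F := mem_F_crit hXY hTF hxcH
    (fun t' ht' => hretr _ (fun g0 => hTF.hom ht' hf g0))
  have hcFY : c ∈ star F Y := ⟨xc, yc, ι, π, wc, hxcF, hyc, hTc'⟩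
  -- final triangle
  have h9 := inv_rot_of_distTriang _ (inv_rot_of_distTriang _ (inv_rot_of_distTriang _ hT3))
  have h10 := dist_iso₂ h9 (sIso y)
  exact ⟨t⟦(-1:ℤ)⟧, c⟦(-1:ℤ)⟧, _, _, _, mem_shiftSet_self ht (-1),
    mem_shiftSet_self hcFY (-1), h10⟩

end HRSAux4

section HRSAux5

set_option linter.unusedSectionVars false
set_option maxHeartbeats 1000000

variable {X Y T F : Set C}

lemma gen_tilt (hXY : IsTStructure X Y) (hTF : IsTorsionPairIn (heart X Y) T F) (d : C) :
    d ∈ star (star X (shiftSet T (-1))) (shiftSet (star F Y) (-1)) := by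
  classical
  obtain ⟨x, y, f₁, v, w, hx, hy, hT1⟩ := hXY.gen d
  obtain ⟨tm, e, am, b, c', htm, he, hT2⟩ := stepA hXY hTF hy
  obtain ⟨th, hth, ⟨e2⟩⟩ := htm
  have hthX : th ∈ X := (hTF.subT hth).1
  have etm : tm⟦(1:ℤ)⟧ ≅ th := ((shiftFunctor C (1:ℤ)).mapIso e2).symm.trans (sIso' th)
  have htm' : tm ∈ shiftSet T (-1) := ⟨th, hth, ⟨e2⟩⟩
  -- vanishing facts
  have hXe : ∀ {x' : C}, x' ∈ X → ZH x' e := fun hx' => zh_X_E hXY hTF hx' he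
  have hXeneg : ∀ {x' : C}, x' ∈ X → ZH x' (e⟦(-1:ℤ)⟧) := fun hx' => zh_X_Eneg hXY hTF hx' he
  have htme : ZH (tm⟦(1:ℤ)⟧) e := zh_iso_left etm.symm (zh_X_E hXY hTF hthX he)
  -- the triangle (a', d, e) on the composite  v ≫ b
  obtain ⟨Zb, g₁, g₂, hTg⟩ := distinguished_cocone_triangle (v ≫ b)
  have hT3 := inv_rot_of_distTriang _ hTg
  have hvw : v ≫ w = 0 := comp_distTriang_mor_zero₂₃ _ hT1
  have hf₁v : f₁ ≫ v = 0 := comp_distTriang_mor_zero₁₂ _ hT1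
  have hamb : am ≫ b = 0 := comp_distTriang_mor_zero₁₂ _ hT2
  have hf'g : (Triangle.mk (v ≫ b) g₁ g₂).invRotate.mor₁ ≫ (v ≫ b) = 0 :=
    comp_distTriang_mor_zero₁₂ _ hT3
  -- rB : x ⟶ a'
  obtain ⟨rB, hrB0⟩ := Triangle.coyoneda_exact₂ _ hT3 f₁ (by
    show f₁ ≫ (v ≫ b) = 0
    rw [← assoc, hf₁v, zero_comp])
  change x ⟶ Zb⟦(-1:ℤ)⟧ at rB
  have hrB : f₁ = rB ≫ (Triangle.mk (v ≫ b) g₁ g₂).invRotate.mor₁ := hrB0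
  -- sB : a' ⟶ tm
  obtain ⟨sB, hsB0⟩ := Triangle.coyoneda_exact₂ _ hT2
    ((Triangle.mk (v ≫ b) g₁ g₂).invRotate.mor₁ ≫ v) (by
      erw [assoc]; exact hf'g)
  change Zb⟦(-1:ℤ)⟧ ⟶ tm at sB
  have hsB : (Triangle.mk (v ≫ b) g₁ g₂).invRotate.mor₁ ≫ v = sB ≫ am := hsB0
  -- tB : y ⟶ e  (TR3 completion)
  obtain ⟨tB, htB₁0, htB₂0⟩ := complete_distinguished_triangle_morphism
    (Triangle.mk f₁ v w) ((Triangle.mk (v ≫ b) g₁ g₂).invRotate) hT1 hT3 rB (𝟙 d) (by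
      show f₁ ≫ 𝟙 d = rB ≫ (Triangle.mk (v ≫ b) g₁ g₂).invRotate.mor₁
      rw [comp_id, hrB])
  have htB₁ : v ≫ tB = 𝟙 d ≫ (v ≫ b) := htB₁0
  have htB₂ : w ≫ (shiftFunctor C (1:ℤ)).map rB =
      tB ≫ (Triangle.mk (v ≫ b) g₁ g₂).invRotate.mor₃ := htB₂0
  rw [id_comp] at htB₁
  -- tB - b factors through w
  obtain ⟨ς, hς0⟩ := Triangle.yoneda_exact₃ _ hT1 ((show y ⟶ e from tB) - b) (by
    show v ≫ ((show y ⟶ e from tB) - b) = 0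
    erw [Preadditive.comp_sub, htB₁, sub_self])
  have hς : (show y ⟶ e from tB) - b = w ≫ ς := hς0
  -- KEY-B : Hom(a', e⟦-1⟧) = 0
  have hKB : ZH (Zb⟦(-1:ℤ)⟧) (e⟦(-1:ℤ)⟧) := by
    intro φ₀
    have hsuff : (shiftFunctor C (1:ℤ)).map φ₀ ≫ (sIso' e).hom = 0 → φ₀ = 0 := by
      intro hs
      have h3 : (shiftFunctor C (1:ℤ)).map φ₀ = 0 := by
        rw [← comp_id ((shiftFunctor C (1:ℤ)).map φ₀), ← (sIso' e).hom_inv_id, ← assoc, hs,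
          zero_comp]
      apply (shiftFunctor C (1:ℤ)).map_injective
      rw [h3, Functor.map_zero]
    apply hsuff
    -- step 1 : mor₃ ≫ φp = 0
    have hbe : b ≫ (Triangle.mk (v ≫ b) g₁ g₂).invRotate.mor₃ =
        w ≫ ((shiftFunctor C (1:ℤ)).map rB -
          ((show x⟦(1:ℤ)⟧ ⟶ e from ς) ≫ (Triangle.mk (v ≫ b) g₁ g₂).invRotate.mor₃ : x⟦(1:ℤ)⟧ ⟶ Zb⟦(-1:ℤ)⟧⟦(1:ℤ)⟧)) := by
      erw [Preadditive.comp_sub, htB₂, ← assoc w ς, ← hς, Preadditive.sub_comp, sub_sub_cancel]; exact rfl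
    have hbEE : b ≫ ((Triangle.mk (v ≫ b) g₁ g₂).invRotate.mor₃ ≫
        ((shiftFunctor C (1:ℤ)).map φ₀ ≫ (sIso' e).hom)) = 0 := by
      erw [← assoc, hbe, assoc]
      exact comp_zh (hXe (X_shift1 hXY hx)) _ _
    obtain ⟨θ₂, hθ₂0⟩ := Triangle.yoneda_exact₃ _ hT2 _ hbEE
    have hθ₂ : (Triangle.mk (v ≫ b) g₁ g₂).invRotate.mor₃ ≫
        ((shiftFunctor C (1:ℤ)).map φ₀ ≫ (sIso' e).hom) = c' ≫ θ₂ := hθ₂0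
    rw [htme θ₂, comp_zero] at hθ₂
    -- step 2 : factor through d⟦1⟧
    obtain ⟨g, hg0⟩ := Triangle.yoneda_exact₃ ((Triangle.mk (v ≫ b) g₁ g₂).invRotate).rotate
      (rot_of_distTriang _ hT3) ((shiftFunctor C (1:ℤ)).map φ₀ ≫ (sIso' e).hom) hθ₂
    change d⟦(1:ℤ)⟧ ⟶ e at g
    have hg : (shiftFunctor C (1:ℤ)).map φ₀ ≫ (sIso' e).hom =
        (-(shiftFunctor C (1:ℤ)).map ((Triangle.mk (v ≫ b) g₁ g₂).invRotate.mor₁)) ≫ g := hg0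
    -- step 3 : factor g through y⟦1⟧
    obtain ⟨θ₁, hθ₁0⟩ := Triangle.yoneda_exact₃ ((Triangle.mk f₁ v w).rotate.rotate)
      (rot_of_distTriang _ (rot_of_distTriang _ hT1)) g (by
        show (-(shiftFunctor C (1:ℤ)).map f₁) ≫ g = 0
        erw [Preadditive.neg_comp, neg_eq_zero]
        exact zh_comp_all (hXe (X_shift1 hXY hx)) _ _)
    change y⟦(1:ℤ)⟧ ⟶ e at θ₁
    have hθ₁ : g = (-(shiftFunctor C (1:ℤ)).map v) ≫ θ₁ := hθ₁0
    -- step 4 : conclude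
    rw [hg, hθ₁]
    erw [Preadditive.neg_comp, Preadditive.neg_comp, Preadditive.comp_neg, neg_neg]
    erw [← assoc, ← Functor.map_comp, hsB, Functor.map_comp, assoc]
    exact comp_zh htme _ _
  -- the comparison object  fh := W⟦-1⟧  with triangle (x⟦1⟧⟦-1⟧, fh, tm)
  obtain ⟨W, pw, ωw, hT0⟩ := distinguished_cocone_triangle (am ≫ w)
  have hT6 := inv_rot_of_distTriang _ (inv_rot_of_distTriang _ hT0)
  have hσam : (Triangle.mk (am ≫ w) pw ωw).invRotate.mor₁ ≫ (am ≫ w) = 0 :=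
    comp_distTriang_mor_zero₁₂ _ (inv_rot_of_distTriang _ hT0)
  have hq₆σ : ((Triangle.mk (am ≫ w) pw ωw).invRotate).invRotate.mor₁ ≫
      (Triangle.mk (am ≫ w) pw ωw).invRotate.mor₁ = 0 :=
    comp_distTriang_mor_zero₁₂ _ hT6
  have hsamw : sB ≫ (am ≫ w) = 0 := by
    erw [← assoc, ← hsB, assoc, hvw, comp_zero]
  -- φB : a' ⟶ fh
  obtain ⟨φB, hφB0⟩ := Triangle.coyoneda_exact₃ _ hT6 sB (by
    show sB ≫ ((am ≫ w) ≫ (shiftEquiv C (1:ℤ)).counitIso.inv.app (x⟦(1:ℤ)⟧)) = 0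
    rw [← assoc, hsamw, zero_comp])
  change Zb⟦(-1:ℤ)⟧ ⟶ W⟦(-1:ℤ)⟧ at φB
  have hφB : sB = φB ≫ (Triangle.mk (am ≫ w) pw ωw).invRotate.mor₁ := hφB0
  -- ξ : fh ⟶ d
  obtain ⟨ξ, hξ0⟩ := Triangle.coyoneda_exact₂ (Triangle.mk f₁ v w).rotate
    (rot_of_distTriang _ hT1) ((Triangle.mk (am ≫ w) pw ωw).invRotate.mor₁ ≫ am) (by
      show ((Triangle.mk (am ≫ w) pw ωw).invRotate.mor₁ ≫ am) ≫ w = 0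
      erw [assoc]; exact hσam)
  change W⟦(-1:ℤ)⟧ ⟶ d at ξ
  have hξ : (Triangle.mk (am ≫ w) pw ωw).invRotate.mor₁ ≫ am = ξ ≫ v := hξ0
  -- ψB : fh ⟶ a'
  obtain ⟨ψB, hψB0⟩ := Triangle.coyoneda_exact₂ _ hT3 ξ (by
    show ξ ≫ (v ≫ b) = 0
    erw [← assoc, ← hξ, assoc, hamb, comp_zero])
  change W⟦(-1:ℤ)⟧ ⟶ Zb⟦(-1:ℤ)⟧ at ψB
  have hψB : ξ = (ψB ≫ (Triangle.mk (v ≫ b) g₁ g₂).invRotate.mor₁ : W⟦(-1:ℤ)⟧ ⟶ d) := hψB0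
  -- the defect of the retraction
  obtain ⟨ζ, hζ0⟩ := Triangle.coyoneda_exact₂ _ hT1
    ((φB ≫ ξ : Zb⟦(-1:ℤ)⟧ ⟶ d) - (show Zb⟦(-1:ℤ)⟧ ⟶ d from (Triangle.mk (v ≫ b) g₁ g₂).invRotate.mor₁)) (by
      show ((φB ≫ ξ : Zb⟦(-1:ℤ)⟧ ⟶ d) - (show Zb⟦(-1:ℤ)⟧ ⟶ d from (Triangle.mk (v ≫ b) g₁ g₂).invRotate.mor₁)) ≫ v = 0
      erw [Preadditive.sub_comp, assoc, ← hξ, ← assoc, ← hφB, ← hsB, sub_self])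
  change Zb⟦(-1:ℤ)⟧ ⟶ x at ζ
  have hζ : (φB ≫ ξ : Zb⟦(-1:ℤ)⟧ ⟶ d) - (show Zb⟦(-1:ℤ)⟧ ⟶ d from (Triangle.mk (v ≫ b) g₁ g₂).invRotate.mor₁) =
      ζ ≫ f₁ := hζ0
  have hΔ : (φB ≫ ψB : Zb⟦(-1:ℤ)⟧ ⟶ Zb⟦(-1:ℤ)⟧) =
      𝟙 (Zb⟦(-1:ℤ)⟧) + (ζ ≫ rB : Zb⟦(-1:ℤ)⟧ ⟶ Zb⟦(-1:ℤ)⟧) := by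
    have h6 : ((φB ≫ ψB : Zb⟦(-1:ℤ)⟧ ⟶ Zb⟦(-1:ℤ)⟧) -
        (𝟙 (Zb⟦(-1:ℤ)⟧) + (ζ ≫ rB : Zb⟦(-1:ℤ)⟧ ⟶ Zb⟦(-1:ℤ)⟧))) ≫
        (Triangle.mk (v ≫ b) g₁ g₂).invRotate.mor₁ = 0 := by
      erw [Preadditive.sub_comp, Preadditive.add_comp, assoc, ← hψB, id_comp, assoc, ← hrB, ← hζ]
      exact sub_eq_zero.mpr (add_sub_cancel _ _).symm
    obtain ⟨θΔ, hθΔ0⟩ := Triangle.coyoneda_exact₂ _ (inv_rot_of_distTriang _ hT3) _ h6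
    have hθΔ : (φB ≫ ψB : Zb⟦(-1:ℤ)⟧ ⟶ Zb⟦(-1:ℤ)⟧) -
        (𝟙 (Zb⟦(-1:ℤ)⟧) + (ζ ≫ rB : Zb⟦(-1:ℤ)⟧ ⟶ Zb⟦(-1:ℤ)⟧)) =
        θΔ ≫ ((Triangle.mk (v ≫ b) g₁ g₂).invRotate).invRotate.mor₁ := hθΔ0
    erw [hKB θΔ, zero_comp] at hθΔ
    exact sub_eq_zero.mp hθΔ
  -- q₆ ≫ ψB factors through rB
  obtain ⟨ζ₂, hζ₂0⟩ := Triangle.coyoneda_exact₂ _ hT1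
    (((Triangle.mk (am ≫ w) pw ωw).invRotate).invRotate.mor₁ ≫ ξ) (by
      show (((Triangle.mk (am ≫ w) pw ωw).invRotate).invRotate.mor₁ ≫ ξ) ≫ v = 0
      erw [assoc, ← hξ, ← assoc, hq₆σ, zero_comp])
  have hζ₂ : ((Triangle.mk (am ≫ w) pw ωw).invRotate).invRotate.mor₁ ≫ ξ = ζ₂ ≫ f₁ := hζ₂0
  have hq₆ψB : ((Triangle.mk (am ≫ w) pw ωw).invRotate).invRotate.mor₁ ≫ ψB = ζ₂ ≫ rB := by
    have h8 : (((Triangle.mk (am ≫ w) pw ωw).invRotate).invRotate.mor₁ ≫ ψB - ζ₂ ≫ rB) ≫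
        (Triangle.mk (v ≫ b) g₁ g₂).invRotate.mor₁ = 0 := by
      erw [Preadditive.sub_comp, assoc, ← hψB, hζ₂, assoc, ← hrB, sub_self]
    obtain ⟨θq, hθq0⟩ := Triangle.coyoneda_exact₂ _ (inv_rot_of_distTriang _ hT3) _ h8
    have hθq : ((Triangle.mk (am ≫ w) pw ωw).invRotate).invRotate.mor₁ ≫ ψB - ζ₂ ≫ rB =
        θq ≫ ((Triangle.mk (v ≫ b) g₁ g₂).invRotate).invRotate.mor₁ := hθq0
    erw [zh_iso_left (sIso x).symm (hXeneg hx) θq, zero_comp] at hθq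
    exact sub_eq_zero.mp hθq
  -- decompose a' and transfer
  obtain ⟨xa, ya, ιa, πa, wa, hxa, hya, hTa⟩ := hXY.gen (Zb⟦(-1:ℤ)⟧)
  obtain ⟨ea, hea0⟩ := Triangle.yoneda_exact₂ _ hTa sB
    (zh_XY hXY hxa (tneg_mem_Y hXY hTF htm') _)
  have hea : sB = πa ≫ ea := hea0
  obtain ⟨eb, heb0⟩ := Triangle.yoneda_exact₂ _ hT6 (ψB ≫ πa) (by
    show ((Triangle.mk (am ≫ w) pw ωw).invRotate).invRotate.mor₁ ≫ (ψB ≫ πa) = 0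
    erw [← assoc, hq₆ψB, assoc, zh_XY hXY hx hya (rB ≫ πa), comp_zero])
  have heb : ψB ≫ πa = (Triangle.mk (am ≫ w) pw ωw).invRotate.mor₁ ≫ eb := heb0
  have hy_retr : (ea ≫ eb : ya ⟶ ya) = 𝟙 ya := by
    have h9 : πa ≫ ((ea ≫ eb : ya ⟶ ya) - 𝟙 ya) = 0 := by
      erw [Preadditive.comp_sub, ← assoc, ← hea, hφB, assoc, ← heb, ← assoc, hΔ,
        Preadditive.add_comp, id_comp, assoc, zh_XY hXY hx hya (rB ≫ πa), comp_zero, add_zero,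
        comp_id, sub_self]
    obtain ⟨θy, hθy0⟩ := Triangle.yoneda_exact₃ _ hTa _ h9
    have hθy : (ea ≫ eb : ya ⟶ ya) - 𝟙 ya = wa ≫ θy := hθy0
    rw [zh_XY hXY (X_shift1 hXY hxa) hya θy, comp_zero] at hθy
    exact sub_eq_zero.mp hθy
  -- ya⟦1⟧ ∈ T
  have hretr : ∀ V : C, ZH (tm⟦(1:ℤ)⟧) V → ZH (ya⟦(1:ℤ)⟧) V := by
    intro V hV ξ'
    have h10 : (shiftFunctor C (1:ℤ)).map ea ≫ (shiftFunctor C (1:ℤ)).map eb = 𝟙 _ := by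
      erw [← Functor.map_comp, hy_retr]
      exact CategoryTheory.Functor.map_id _ _
    have hξ' : ξ' = (shiftFunctor C (1:ℤ)).map ea ≫ ((shiftFunctor C (1:ℤ)).map eb ≫ ξ') := by
      erw [← assoc, h10, id_comp]
    rw [hξ']
    exact comp_zh hV _ _
  have hyaX : ya⟦(1:ℤ)⟧ ∈ X := mem_X_of_perp hXY (fun y'' hy'' =>
    hretr y'' (zh_iso_left etm.symm (zh_XY hXY hthX hy'')))
  have hyaT : ya⟦(1:ℤ)⟧ ∈ T := mem_T_crit hXY hTF ⟨hyaX, ⟨ya, hya, ⟨Iso.refl _⟩⟩⟩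
    (fun f'' hf'' => hretr f'' (zh_iso_left etm.symm (fun g0 => hTF.hom hth hf'' g0)))
  have ha' : Zb⟦(-1:ℤ)⟧ ∈ star X (shiftSet T (-1)) :=
    ⟨xa, ya, ιa, πa, wa, hxa, ⟨ya⟦(1:ℤ)⟧, hyaT, ⟨sIso ya⟩⟩, hTa⟩
  exact ⟨Zb⟦(-1:ℤ)⟧, e, (Triangle.mk (v ≫ b) g₁ g₂).invRotate.mor₁, v ≫ b,
    (Triangle.mk (v ≫ b) g₁ g₂).invRotate.mor₃, ha', he, hT3⟩

end HRSAux5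
/-- the right HRS tilt of a t-structure at a torsion pair in its heart is
again a t-structure, with heart `F * T[-1]`. -/
theorem hrs_tilt_is_tstructure {X Y T F : Set C} (hXY : IsTStructure X Y)
    (hTF : IsTorsionPairIn (heart X Y) T F) :
    IsTStructure (star X (shiftSet T (-1))) (shiftSet (star F Y) (-1)) ∧
    heart (star X (shiftSet T (-1))) (shiftSet (star F Y) (-1)) =
      star F (shiftSet T (-1)) := by
  constructor
  · exact
      { isoX := fun _ _ e h => star_iso e h
        isoY := fun _ _ e h => shiftSet_iso e h
        zeroX := fun z hz => X_sub_X' hXY hTF (hXY.zeroX z hz)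
        zeroY := fun z hz => zero_mem_Y' hXY hTF hz
        hom := homOrth_tilt hXY hTF
        gen := gen_tilt hXY hTF
        shift := shift_tilt hXY hTF }
  · exact Set.Subset.antisymm (heart_tilt_sub hXY hTF) (heart_tilt_sup hXY hTF)
end SMPaper
end

section
/- Let D be a Hom-finite Krull–Schmidt triangulated category, S an orthogonal collection in D, and d an object admitting a right ⟨S⟩-approximation. In the minimal (⟨S⟩, S^⊥)-triangle s_d →^f d →^g z_d → s_d[1] (where f is a minimal right ⟨S⟩-approximation and z_d ∈ S^⊥), the induced map Hom(s, f): Hom(s, s_d) → Hom(s, d) is an isomorphism for every s ∈ S. -/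
open CategoryTheory Category Limits Pretriangulated

universe v u

namespace SMPaper

variable {C : Type u} [Category.{v} C] [Preadditive C] [HasZeroObject C] [HasShift C ℤ]
  [∀ n : ℤ, (shiftFunctor C n).Additive] [Pretriangulated C]

/-- Any morphism from an object of the extension closure of `S` to an object right
orthogonal to `S` vanishes. -/
lemma extClosure_hom_zero {S : Set C} {y : C}
    (hy : ∀ s' ∈ S, ∀ β : s' ⟶ y, β = 0) {x : C} (hx : ExtClosureP S x) :
    ∀ u : x ⟶ y, u = 0 := by
  induction hx with
  | of s hs => exact hy s hs
  | zero z hz => exact fun u => hz.eq_of_src u 0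
  | iso x x' e hx ih =>
    intro u
    have h1 : e.hom ≫ u = 0 := ih (e.hom ≫ u)
    calc u = e.inv ≫ (e.hom ≫ u) := by simp
    _ = 0 := by rw [h1, comp_zero]
  | ext a x b i p v hTx ha hb iha ihb =>
    intro u
    obtain ⟨u', hu'⟩ : ∃ u' : b ⟶ y, u = p ≫ u' := Triangle.yoneda_exact₂ _ hTx u (iha (i ≫ u))
    rw [hu', ihb u', comp_zero]

/-- Key lemma: if `x` lies in the extension closure of an orthogonal collection `S`,
`φ : s ⟶ x` is a nonzero morphism with `s ∈ S`, and `c` is a cone of `φ`, then every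
morphism from `c` to an object `y ∈ S^⊥` vanishes. -/
lemma cone_hom_zero_of_orthogonal {S : Set C} (hS : IsOrthogonal S) {y : C}
    (hy : ∀ s' ∈ S, ∀ β : s' ⟶ y, β = 0) {x : C} (hx : ExtClosureP S x) :
    ∀ {s : C}, s ∈ S → ∀ (φ : s ⟶ x), φ ≠ 0 →
      ∀ {c : C} (q : x ⟶ c) (r : c ⟶ (shiftFunctor C (1 : ℤ)).obj s),
        Triangle.mk φ q r ∈ (distTriang C) → ∀ m : c ⟶ y, m = 0 := by
  induction hx with
  | of s' hs' =>
    intro s hs φ hφ c q r hTc m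
    by_cases hiso : Nonempty (s ≅ s')
    · obtain ⟨e⟩ := hiso
      have hfe : φ = (φ ≫ e.inv) ≫ e.hom := by simp
      rcases hS.div s hs (φ ≫ e.inv) with h0 | hI
      · exact absurd (by rw [hfe, h0, zero_comp]) hφ
      · have hIφ : IsIso φ := by rw [hfe]; infer_instance
        have hq : q = 0 := by
          have h12 : φ ≫ q = 0 := comp_distTriang_mor_zero₁₂ _ hTc
          calc q = inv φ ≫ (φ ≫ q) := by simp
          _ = 0 := by rw [h12, comp_zero]
        have hr : r = 0 := by
          have h31 : r ≫ (shiftFunctor C (1 : ℤ)).map φ = 0 :=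
            comp_distTriang_mor_zero₃₁ _ hTc
          calc r = (r ≫ (shiftFunctor C (1 : ℤ)).map φ) ≫
              inv ((shiftFunctor C (1 : ℤ)).map φ) := by simp
          _ = 0 := by rw [h31, zero_comp]
        obtain ⟨n, hn⟩ : ∃ n : (shiftFunctor C (1 : ℤ)).obj s ⟶ y, m = r ≫ n :=
          Triangle.yoneda_exact₃ _ hTc m (by
          change q ≫ m = 0; rw [hq, zero_comp])
        rw [hn]
        rw [hr, zero_comp]
    · exact absurd (hS.hom hs hs' hiso φ) hφ
  | zero z hz =>
    intro s hs φ hφ c q r hTc m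
    exact absurd (hz.eq_of_tgt φ 0) hφ
  | iso x x' e hx ih =>
    intro s hs φ hφ c q r hTc m
    have hφ₀ : φ ≫ e.inv ≠ 0 := by
      intro h0
      apply hφ
      calc φ = (φ ≫ e.inv) ≫ e.hom := by simp
      _ = 0 := by rw [h0, zero_comp]
    have hTc' : Triangle.mk (φ ≫ e.inv) (e.hom ≫ q) r ∈ (distTriang C) := by
      refine isomorphic_distinguished _ hTc _ ?_
      exact Triangle.isoMk _ _ (Iso.refl _) e (Iso.refl _) (by change (φ ≫ e.inv) ≫ e.hom = 𝟙 s ≫ φ; simp)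
        (by change (e.hom ≫ q) ≫ 𝟙 c = e.hom ≫ q; simp)
        (by change r ≫ (shiftFunctor C (1 : ℤ)).map (𝟙 s) = 𝟙 c ≫ r; simp)
    exact ih hs (φ ≫ e.inv) hφ₀ (e.hom ≫ q) r hTc' m
  | ext a x b i p v hTx ha hb iha ihb =>
    intro s hs φ hφ c q r hTc m
    have hxcl : ExtClosureP S x := ExtClosureP.ext a x b i p v hTx ha hb
    have hqm : q ≫ m = 0 := extClosure_hom_zero hy hxcl (q ≫ m)
    obtain ⟨n, hn⟩ : ∃ n : (shiftFunctor C (1 : ℤ)).obj s ⟶ y, m = r ≫ n :=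
      Triangle.yoneda_exact₃ _ hTc m hqm
    by_cases hρ : φ ≫ p = 0
    · -- `φ` factors through `a`
      obtain ⟨ψ, hψ⟩ : ∃ ψ : s ⟶ a, φ = ψ ≫ i := Triangle.coyoneda_exact₂ _ hTx φ hρ
      have hψ0 : ψ ≠ 0 := by
        intro h0
        exact hφ (by rw [hψ, h0, zero_comp])
      obtain ⟨ca, qa, ra, hTa⟩ := distinguished_cocone_triangle ψ
      have hran : ra ≫ n = 0 := iha hs ψ hψ0 qa ra hTa (ra ≫ n)
      -- `n` factors through `a⟦1⟧`
      obtain ⟨n'', hn''⟩ : ∃ n'' : (shiftFunctor C (1 : ℤ)).obj a ⟶ y,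
          n = (-((shiftFunctor C (1 : ℤ)).map ψ)) ≫ n'' :=
        Triangle.yoneda_exact₃ _ (rot_of_distTriang _ hTa) n hran
      -- `r ≫ ψ⟦1⟧` factors through `v : b ⟶ a⟦1⟧`
      have hri : (r ≫ (shiftFunctor C (1 : ℤ)).map ψ) ≫
          (Triangle.mk i p v).mor₁⟦(1 : ℤ)⟧' = 0 := by
        change (r ≫ (shiftFunctor C (1 : ℤ)).map ψ) ≫ (shiftFunctor C (1 : ℤ)).map i = 0
        rw [assoc, ← Functor.map_comp, ← hψ]
        exact comp_distTriang_mor_zero₃₁ _ hTc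
      obtain ⟨t, ht⟩ : ∃ t : c ⟶ b, r ≫ (shiftFunctor C (1 : ℤ)).map ψ = t ≫ v :=
        Triangle.coyoneda_exact₁ _ hTx
        (r ≫ (shiftFunctor C (1 : ℤ)).map ψ) hri
      have hvn : v ≫ n'' = 0 := extClosure_hom_zero hy hb (v ≫ n'')
      have hn' : n = (-((shiftFunctor C (1 : ℤ)).map ψ)) ≫ n'' := by
        simpa using hn''
      rw [hn, hn']
      calc r ≫ (-((shiftFunctor C (1 : ℤ)).map ψ)) ≫ n''
          = -((r ≫ (shiftFunctor C (1 : ℤ)).map ψ) ≫ n'') := by simp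
        _ = -((t ≫ v) ≫ n'') := by rw [ht]
        _ = -(t ≫ (v ≫ n'')) := by rw [assoc]
        _ = 0 := by rw [hvn, comp_zero, neg_zero]
    · -- `φ ≫ p ≠ 0`: compare with a cone of `φ ≫ p`
      obtain ⟨c', q', r', hT'⟩ := distinguished_cocone_triangle (φ ≫ p)
      obtain ⟨ξ, hξ₂, hξ₃⟩ : ∃ ξ : c ⟶ c', q ≫ ξ = p ≫ q' ∧
          r ≫ (shiftFunctor C (1 : ℤ)).map (𝟙 s) = ξ ≫ r' := complete_distinguished_triangle_morphism
        (Triangle.mk φ q r) (Triangle.mk (φ ≫ p) q' r') hTc hT' (𝟙 s) p (by change φ ≫ p = 𝟙 s ≫ (φ ≫ p); simp)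
      have hr : r = ξ ≫ r' := by simpa using hξ₃
      have hr'n : r' ≫ n = 0 := ihb hs (φ ≫ p) hρ q' r' hT' (r' ≫ n)
      rw [hn, hr, assoc, hr'n, comp_zero]

/-- in the minimal `(⟨S⟩, S^⊥)`-triangle `s_d → d → z_d → s_d[1]` for an
orthogonal collection `S`, the map `Hom(s, f) : Hom(s, s_d) → Hom(s, d)` is an
isomorphism for every `s ∈ S`. -/
theorem hom_of_minimal_approx_bijective (k : Type*) [Field k] [Linear k C]
    [∀ x y : C, Module.Finite k (x ⟶ y)] [IsIdempotentComplete C]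
    {S : Set C} (hS : IsOrthogonal S) {sd d zd : C}
    (f : sd ⟶ d) (g : d ⟶ zd) (h : zd ⟶ (shiftFunctor C (1 : ℤ)).obj sd)
    (hT : Triangle.mk f g h ∈ (distTriang C))
    (hf : IsRightApprox (extClosure S) f) (hmin : RightMinimal f)
    (hz : zd ∈ rPerp S) :
    ∀ s ∈ S, Function.Bijective (fun φ : s ⟶ sd => φ ≫ f) := by
  intro s hs
  have key : ∀ φ : s ⟶ sd, φ ≫ f = 0 → φ = 0 := by
    intro φ hφf
    by_contra hφ
    obtain ⟨c, q, r, hTc⟩ := distinguished_cocone_triangle φ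
    obtain ⟨f', hf'⟩ : ∃ f' : c ⟶ d, f = q ≫ f' := Triangle.yoneda_exact₂ _ hTc f hφf
    have hf'g : f' ≫ g = 0 :=
      cone_hom_zero_of_orthogonal hS hz hf.1 hs φ hφ q r hTc (f' ≫ g)
    obtain ⟨γ, hγ⟩ : ∃ γ : c ⟶ sd, f' = γ ≫ f := Triangle.coyoneda_exact₂ _ hT f' hf'g
    have hβf : (q ≫ γ) ≫ f = f := by rw [assoc, ← hγ, ← hf']
    have hβ : IsIso (q ≫ γ) := hmin (q ≫ γ) hβf
    have hφq : φ ≫ q = 0 := comp_distTriang_mor_zero₁₂ _ hTc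
    have h0 : φ ≫ (q ≫ γ) = 0 := by rw [← assoc, hφq, zero_comp]
    apply hφ
    calc φ = (φ ≫ (q ≫ γ)) ≫ inv (q ≫ γ) := by simp
    _ = 0 := by rw [h0, zero_comp]
  constructor
  · intro φ₁ φ₂ h12
    have : (φ₁ - φ₂) ≫ f = 0 := by
      rw [Preadditive.sub_comp]
      simpa using congrArg (fun z => z - φ₂ ≫ f) h12
    have := key _ this
    exact sub_eq_zero.mp this
  · intro ψ
    obtain ⟨φ, hφ⟩ := hf.2 (ExtClosureP.of s hs) ψ
    exact ⟨φ, hφ⟩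
end SMPaper
end

section
/- Let H be a length heart in a triangulated category D with simple objects U and S ⊆ U. If the right simple tilt K = (S^⊥ ∩ H) * ⟨S⟩[-1] is a length heart, then every object of K[1] admits a right ⟨S⟩-approximation. -/
open CategoryTheory Category Limits Pretriangulated

universe v u

namespace SMPaper

variable {C : Type u} [Category.{v} C] [Preadditive C] [HasZeroObject C] [HasShift C ℤ]
  [∀ n : ℤ, (shiftFunctor C n).Additive] [Pretriangulated C]

set_option linter.unusedSectionVars false


/-- All maps from `a` to `b` vanish. -/
def ZHom (a b : C) : Prop := ∀ f : a ⟶ b, f = 0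

lemma ZHom.of_src_iso {a a' b : C} (e : a ≅ a') (h : ZHom a b) : ZHom a' b := fun f => by
  have : e.hom ≫ f = 0 := h _
  rw [← id_comp f, ← e.inv_hom_id, assoc, this, comp_zero]

lemma ZHom.of_tgt_iso {a b b' : C} (e : b ≅ b') (h : ZHom a b') : ZHom a b := fun f => by
  have : f ≫ e.hom = 0 := h _
  rw [← comp_id f, ← e.hom_inv_id, ← assoc, this, zero_comp]

lemma ZHom.of_isZero_src {a b : C} (h : IsZero a) : ZHom a b := fun f => h.eq_of_src f 0

lemma ZHom.of_isZero_tgt {a b : C} (h : IsZero b) : ZHom a b := fun f => h.eq_of_tgt f 0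

/-- shift conjugation: if `Hom(a, b⟦-1⟧) = 0` then `Hom(a⟦1⟧, b) = 0`. -/
lemma ZHom.shift_up {a b : C} (h : ZHom a (b⟦(-1 : ℤ)⟧)) : ZHom (a⟦(1 : ℤ)⟧) b := by
  intro f
  have h1 : ((shiftEquiv C (1 : ℤ)).unitIso.app a).hom ≫ (shiftFunctor C (-1 : ℤ)).map f = 0 :=
    h _
  have h2 : (shiftFunctor C (-1 : ℤ)).map f = 0 :=
    (cancel_epi ((shiftEquiv C (1 : ℤ)).unitIso.app a).hom).mp (h1.trans comp_zero.symm)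
  exact (shiftFunctor C (-1 : ℤ)).map_injective (by rw [h2, Functor.map_zero])

/-- shift conjugation: if `Hom(a⟦1⟧, b) = 0` then `Hom(a, b⟦-1⟧) = 0`. -/
lemma ZHom.shift_down {a b : C} (h : ZHom (a⟦(1 : ℤ)⟧) b) : ZHom a (b⟦(-1 : ℤ)⟧) := by
  intro f
  have h1 : (shiftFunctor C (1 : ℤ)).map f ≫ ((shiftEquiv C (1 : ℤ)).counitIso.app b).hom = 0 :=
    h _
  have h2 : (shiftFunctor C (1 : ℤ)).map f = 0 :=
    (cancel_mono ((shiftEquiv C (1 : ℤ)).counitIso.app b).hom).mp (h1.trans zero_comp.symm)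
  exact (shiftFunctor C (1 : ℤ)).map_injective (by rw [h2, Functor.map_zero])

section TriangleHelpers

/-- maps into `obj₂` vanish, given vanishing into `obj₁` and `obj₃`. -/
lemma zhom₂_co {T : Triangle C} (hT : T ∈ distTriang C) {W : C}
    (h1 : ZHom W T.obj₁) (h3 : ZHom W T.obj₃) : ZHom W T.obj₂ := by
  intro f
  obtain ⟨g, hg⟩ := Triangle.coyoneda_exact₂ T hT f (by rw [h3 (f ≫ T.mor₂)])
  rw [hg, h1 g, zero_comp]

/-- maps from `obj₂` vanish, given vanishing from `obj₁` and `obj₃`. -/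
lemma zhom₂_contra {T : Triangle C} (hT : T ∈ distTriang C) {W : C}
    (h1 : ZHom T.obj₁ W) (h3 : ZHom T.obj₃ W) : ZHom T.obj₂ W := by
  intro f
  obtain ⟨g, hg⟩ := Triangle.yoneda_exact₂ T hT f (h1 _)
  rw [hg, h3 g, comp_zero]

lemma tri_zero₁₂ {a d b : C} {f : a ⟶ d} {g : d ⟶ b} {w : b ⟶ a⟦(1 : ℤ)⟧}
    (h : Triangle.mk f g w ∈ distTriang C) : f ≫ g = 0 :=
  comp_distTriang_mor_zero₁₂ _ h

lemma tri_zero₂₃ {a d b : C} {f : a ⟶ d} {g : d ⟶ b} {w : b ⟶ a⟦(1 : ℤ)⟧}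
    (h : Triangle.mk f g w ∈ distTriang C) : g ≫ w = 0 :=
  comp_distTriang_mor_zero₂₃ _ h

lemma tri_zero₃₁ {a d b : C} {f : a ⟶ d} {g : d ⟶ b} {w : b ⟶ a⟦(1 : ℤ)⟧}
    (h : Triangle.mk f g w ∈ distTriang C) : w ≫ (shiftFunctor C (1 : ℤ)).map f = 0 :=
  comp_distTriang_mor_zero₃₁ _ h

/-- yoneda exactness at the first object: a map from `obj₁` whose "shifted composite"
with `mor₃` vanishes factors through `mor₁`. -/
lemma yoneda_exact₁' {T : Triangle C} (hT : T ∈ distTriang C) {W : C} (f : T.obj₁ ⟶ W)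
    (hf : T.mor₃ ≫ (shiftFunctor C (1 : ℤ)).map f = 0) :
    ∃ g : T.obj₂ ⟶ W, f = T.mor₁ ≫ g := by
  have hT' := inv_rot_of_distTriang T hT
  have hcond : (T.invRotate).mor₁ ≫ f = 0 := by
    show (-((shiftFunctor C (-1 : ℤ)).map T.mor₃ ≫
      (shiftFunctorCompIsoId C (1 : ℤ) (-1 : ℤ) (by omega)).hom.app T.obj₁)) ≫ f = 0
    rw [Preadditive.neg_comp, neg_eq_zero, assoc]
    have hnat := (shiftFunctorCompIsoId C (1 : ℤ) (-1 : ℤ) (by omega)).hom.naturality f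
    dsimp at hnat
    rw [← hnat, ← assoc, ← Functor.map_comp, hf, Functor.map_zero, zero_comp]
  obtain ⟨g, hg⟩ := Triangle.yoneda_exact₂ _ hT' f hcond
  exact ⟨g, hg⟩

end TriangleHelpers

section ShiftTriangles

lemma isZero_shift_of_isZero {a : C} (h : IsZero a) (n : ℤ) :
    IsZero ((shiftFunctor C n).obj a) := by
  rw [IsZero.iff_id_eq_zero] at h ⊢
  rw [← (shiftFunctor C n).map_id, h, Functor.map_zero]

lemma isZero_of_isZero_shift {a : C} (n : ℤ) (h : IsZero ((shiftFunctor C n).obj a)) :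
    IsZero a :=
  IsZero.of_iso (isZero_shift_of_isZero h (-n)) ((shiftEquiv C n).unitIso.app a)

/-- the sign iso -/
@[simps]
def sgnIso (n : ℤ) (a : C) : a ≅ a where
  hom := n.negOnePow • 𝟙 a
  inv := n.negOnePow • 𝟙 a
  hom_inv_id := by simp [smul_smul]
  inv_hom_id := by simp [smul_smul]

/-- shifting a distinguished triangle by `n`, keeping the first two maps unsigned. -/
lemma shift_triangle_dist {A B' Z : C} (u : A ⟶ B') (v : B' ⟶ Z) (w : Z ⟶ A⟦(1 : ℤ)⟧)
    (h : Triangle.mk u v w ∈ distTriang C) (n : ℤ) :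
    ∃ w' : (shiftFunctor C n).obj Z ⟶ ((shiftFunctor C n).obj A)⟦(1 : ℤ)⟧,
      Triangle.mk ((shiftFunctor C n).map u) ((shiftFunctor C n).map v) w' ∈ distTriang C := by
  have hs : (Triangle.shiftFunctor C n).obj (Triangle.mk u v w) ∈ distTriang C :=
    Triangle.shift_distinguished _ h n
  refine ⟨n.negOnePow • ((shiftFunctor C n).map w ≫ (shiftFunctorComm C 1 n).hom.app A), ?_⟩
  refine isomorphic_distinguished _ hs _ ?_
  refine Triangle.isoMk _ _ (Iso.refl _) (sgnIso n _) (Iso.refl _) ?_ ?_ ?_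
  · dsimp
    simp [Triangle.mk, Triangle.shiftFunctor]
  · dsimp
    simp [smul_smul, Triangle.mk, Triangle.shiftFunctor]
  · dsimp
    simp [Triangle.mk, Triangle.shiftFunctor]

end ShiftTriangles


section TStr

variable {X Y : Set C} (hT : IsTStructure X Y)

include hT

lemma tst_hom {x y : C} (hx : x ∈ X) (hy : y ∈ Y) : ZHom x y := fun f => hT.hom hx hy f

lemma tst_shiftX {x : C} (hx : x ∈ X) : (x⟦(1 : ℤ)⟧ : C) ∈ X :=
  hT.shift ⟨x, hx, ⟨Iso.refl _⟩⟩

/-- `Y` is stable under `⟦-1⟧`. -/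
lemma tst_negY {y : C} (hy : y ∈ Y) : (y⟦(-1 : ℤ)⟧ : C) ∈ Y := by
  obtain ⟨x, b, f, g, w, hx, hb, htri⟩ := hT.gen (y⟦(-1 : ℤ)⟧)
  have hf : f = 0 := ZHom.shift_down (b := y) (fun f' => hT.hom (tst_shiftX hT hx) hy f') f
  -- id of x factors through `b⟦-1⟧`
  have h1 : 𝟙 x = 0 := by
    have hinv := inv_rot_of_distTriang _ htri
    obtain ⟨σ, hσ⟩ := Triangle.coyoneda_exact₂ _ hinv (𝟙 x)
      ((id_comp _).trans hf)
    have hσ0 : σ = 0 := ZHom.shift_down (b := b) (fun f' => hT.hom (tst_shiftX hT hx) hb f') σ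
    rw [hσ, hσ0]; exact zero_comp
  have hxz : IsZero x := by rwa [IsZero.iff_id_eq_zero]
  have : IsIso g := Triangle.isZero₁_iff_isIso₂ _ htri |>.1 hxz
  exact hT.isoY (asIso g).symm hb

lemma tst_perpX {d : C} (hd : ∀ y ∈ Y, ZHom d y) : d ∈ X := by
  obtain ⟨x, b, f, g, w, hx, hb, htri⟩ := hT.gen d
  have hg : g = 0 := hd b hb g
  have h1 : 𝟙 b = 0 := by
    have hrot := rot_of_distTriang _ htri
    obtain ⟨ρ, hρ⟩ := Triangle.yoneda_exact₂ _ hrot (𝟙 b) ((comp_id _).trans hg)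
    have hρ0 : ρ = 0 := hT.hom (tst_shiftX hT hx) hb ρ
    rw [hρ, hρ0]; exact comp_zero
  have hbz : IsZero b := by rwa [IsZero.iff_id_eq_zero]
  have : IsIso f := Triangle.isZero₃_iff_isIso₁ _ htri |>.1 hbz
  exact hT.isoX (asIso f) hx

lemma tst_perpY {d : C} (hd : ∀ x ∈ X, ZHom x d) : d ∈ Y := by
  obtain ⟨x, b, f, g, w, hx, hb, htri⟩ := hT.gen d
  have hf : f = 0 := hd x hx f
  have h1 : 𝟙 x = 0 := by
    have hinv := inv_rot_of_distTriang _ htri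
    obtain ⟨σ, hσ⟩ := Triangle.coyoneda_exact₂ _ hinv (𝟙 x)
      ((id_comp _).trans hf)
    have hσ0 : σ = 0 := hT.hom hx (tst_negY hT hb) σ
    rw [hσ, hσ0]; exact zero_comp
  have hxz : IsZero x := by rwa [IsZero.iff_id_eq_zero]
  have : IsIso g := Triangle.isZero₁_iff_isIso₂ _ htri |>.1 hxz
  exact hT.isoY (asIso g).symm hb

/-- `X` is extension closed. -/
lemma tst_extX {a d b : C} {f : a ⟶ d} {g : d ⟶ b} {w : b ⟶ a⟦(1 : ℤ)⟧}
    (htri : Triangle.mk f g w ∈ distTriang C) (ha : a ∈ X) (hb : b ∈ X) : d ∈ X := by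
  refine tst_perpX hT (fun y hy => ?_)
  exact zhom₂_contra htri (tst_hom hT ha hy) (tst_hom hT hb hy)

-- heart facts
lemma heart_memX {h : C} (hh : h ∈ heart X Y) : h ∈ X := hh.1

lemma heart_neg {h : C} (hh : h ∈ heart X Y) : (h⟦(-1 : ℤ)⟧ : C) ∈ Y := by
  obtain ⟨-, y, hy, ⟨e⟩⟩ := hh
  exact hT.isoY ((shiftEquiv C (1 : ℤ)).unitIso.app y ≪≫ (shiftFunctor C (-1 : ℤ)).mapIso e) hy

/-- `Hom(x, h) = 0` for `x ∈ X⟦1⟧`-type sources, `h` in the heart. -/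
lemma heart_zhom_shift {x h : C} (hx : x ∈ X) (hh : h ∈ heart X Y) :
    ZHom (x⟦(1 : ℤ)⟧) h :=
  ZHom.shift_up (tst_hom hT hx (heart_neg hT hh))

/-- the heart is extension closed. -/
lemma heart_ext {a d b : C} {f : a ⟶ d} {g : d ⟶ b} {w : b ⟶ a⟦(1 : ℤ)⟧}
    (htri : Triangle.mk f g w ∈ distTriang C) (ha : a ∈ heart X Y) (hb : b ∈ heart X Y) :
    d ∈ heart X Y := by
  constructor
  · exact tst_extX hT htri (heart_memX hT ha) (heart_memX hT hb)
  · refine ⟨d⟦(-1 : ℤ)⟧, ?_, ⟨(shiftEquiv C (1 : ℤ)).counitIso.app d⟩⟩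
    refine tst_perpY hT (fun x hx => ?_)
    refine ZHom.shift_down ?_
    exact zhom₂_co htri (heart_zhom_shift hT hx ha) (heart_zhom_shift hT hx hb)

end TStr

section Schur

variable {X Y : Set C} (hT : IsTStructure X Y)

include hT

/-- Schur's lemma: a nonzero map between simples of the heart is an isomorphism. -/
lemma schur {s s' : C} (hs : IsSimpleIn (heart X Y) s) (hs' : IsSimpleIn (heart X Y) s')
    (f : s ⟶ s') (hf : f ≠ 0) : IsIso f := by
  obtain ⟨c, g, δ, hc⟩ := distinguished_cocone_triangle f
  have hrotc := rot_of_distTriang _ hc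
  have hcX : c ∈ X := tst_extX hT hrotc (heart_memX hT hs'.1)
    (tst_shiftX hT (heart_memX hT hs.1))
  -- decompose c⟦-1⟧
  obtain ⟨k, y', fk, gk, hk, hkX, hy', hTg⟩ := hT.gen ((c)⟦(-1 : ℤ)⟧)
  obtain ⟨ζ, hTc0⟩ := shift_triangle_dist fk gk hk hTg 1
  set ec : ((c⟦(-1 : ℤ)⟧)⟦(1 : ℤ)⟧ : C) ≅ c := (shiftEquiv C (1 : ℤ)).counitIso.app c with hec
  set e : (k⟦(1 : ℤ)⟧ : C) ⟶ c := (shiftFunctor C (1 : ℤ)).map fk ≫ ec.hom with he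
  set v : c ⟶ (y'⟦(1 : ℤ)⟧ : C) := ec.inv ≫ (shiftFunctor C (1 : ℤ)).map gk with hv
  have hTc1 : Triangle.mk e v ζ ∈ distTriang C := by
    refine isomorphic_distinguished _ hTc0 _ ?_
    refine Triangle.isoMk _ _ (Iso.refl _) ec.symm (Iso.refl _) ?_ ?_ ?_
    · dsimp [e]; simp [Triangle.mk]
    · dsimp [v]; simp [Triangle.mk]
    · dsimp; simp [Triangle.mk]
  -- b := y'⟦1⟧ is in the heart
  have hbH : (y'⟦(1 : ℤ)⟧ : C) ∈ heart X Y := by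
    constructor
    · refine tst_perpX hT (fun y hy => ?_)
      intro τ
      obtain ⟨ρ, hρ⟩ := Triangle.yoneda_exact₃ _ hTc1 τ (tst_hom hT hcX hy _)
      rw [hρ, tst_hom hT (tst_shiftX hT (tst_shiftX hT hkX)) hy ρ]; exact comp_zero
    · exact ⟨y', hy', ⟨Iso.refl _⟩⟩
  -- k is in the heart
  have hx1s : ∀ (x : C), x ∈ X → ZHom (x⟦(1 : ℤ)⟧) s := fun x hx =>
    heart_zhom_shift hT hx hs.1
  have hkH : k ∈ heart X Y := by
    have hZk : ∀ (x : C), x ∈ X → ZHom (x⟦(1 : ℤ)⟧) k := by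
      intro x hx ψ
      have hZc : ZHom ((x⟦(1 : ℤ)⟧)⟦(1 : ℤ)⟧) c := by
        refine zhom₂_co hrotc ?_ ?_
        · exact ZHom.shift_up (tst_hom hT (tst_shiftX hT hx) (heart_neg hT hs'.1))
        · refine ZHom.shift_up (ZHom.of_tgt_iso ?_ (hx1s x hx))
          exact ((shiftEquiv C (1 : ℤ)).unitIso.app s).symm
      have hξ : ψ ≫ fk = 0 := ZHom.shift_down hZc _
      obtain ⟨σ, hσ⟩ := Triangle.coyoneda_exact₂ _ (inv_rot_of_distTriang _ hTg) ψ
        (by dsimp [Triangle.invRotate]; exact hξ)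
      rw [hσ, tst_hom hT (tst_shiftX hT hx) (tst_negY hT hy') σ]; exact zero_comp
    constructor
    · exact hkX
    · refine ⟨k⟦(-1 : ℤ)⟧, ?_, ⟨(shiftEquiv C (1 : ℤ)).counitIso.app k⟩⟩
      exact tst_perpY hT (fun x hx => ZHom.shift_down (hZk x hx))
  -- the kernel map j
  set j2 : ((c)⟦(-1 : ℤ)⟧ : C) ⟶ s := (Triangle.mk f g δ).invRotate.mor₁ with hj2
  have hj2f : j2 ≫ f = 0 := comp_distTriang_mor_zero₁₂ _ (inv_rot_of_distTriang _ hc)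
  set j : k ⟶ s := fk ≫ j2 with hj
  have hjf : j ≫ f = 0 := by rw [hj, assoc, hj2f, comp_zero]
  obtain ⟨m, μ, θ, hm⟩ := distinguished_cocone_triangle j
  -- j is mono on X-tests
  have hmono : ∀ (x : C), x ∈ X → ∀ ψ : x ⟶ k, ψ ≫ j = 0 → ψ = 0 := by
    intro x hx ψ hψ
    have hξ : (ψ ≫ fk) ≫ j2 = 0 := by rw [assoc, ← hj, hψ]
    have hinv2 := inv_rot_of_distTriang _ (inv_rot_of_distTriang _ hc)
    obtain ⟨ρ, hρ⟩ := Triangle.coyoneda_exact₂ _ hinv2 (ψ ≫ fk) hξ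
    have hρ0 : ρ = 0 := tst_hom hT hx (heart_neg hT hs'.1) ρ
    have hψfk : ψ ≫ fk = 0 := by
      exact hρ.trans (by rw [hρ0]; exact zero_comp)
    obtain ⟨σ, hσ⟩ := Triangle.coyoneda_exact₂ _ (inv_rot_of_distTriang _ hTg) ψ
      (by dsimp [Triangle.invRotate]; exact hψfk)
    rw [hσ, tst_hom hT hx (tst_negY hT hy') σ]; exact zero_comp
  -- m is in the heart
  have hmH : m ∈ heart X Y := by
    constructor
    · exact tst_extX hT (rot_of_distTriang _ hm) (heart_memX hT hs.1) (tst_shiftX hT hkH.1)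
    · refine ⟨m⟦(-1 : ℤ)⟧, ?_, ⟨(shiftEquiv C (1 : ℤ)).counitIso.app m⟩⟩
      refine tst_perpY hT (fun x hx => ZHom.shift_down ?_)
      intro ψ'
      have hκ : (ψ' ≫ θ) ≫ (shiftFunctor C (1 : ℤ)).map j = 0 := by
        have h31 := comp_distTriang_mor_zero₃₁ _ hm
        change θ ≫ (shiftFunctor C (1 : ℤ)).map j = 0 at h31
        rw [assoc, h31, comp_zero]
      obtain ⟨ψ, hψ⟩ := (shiftFunctor C (1 : ℤ)).map_surjective (ψ' ≫ θ)
      have hψj : ψ ≫ j = 0 := by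
        apply (shiftFunctor C (1 : ℤ)).map_injective
        rw [Functor.map_comp, hψ, hκ, Functor.map_zero]
      have hθ0 : ψ' ≫ θ = 0 := by rw [← hψ, hmono x hx ψ hψj, Functor.map_zero]
      obtain ⟨χ, hχ⟩ := Triangle.coyoneda_exact₃ _ hm ψ' hθ0
      rw [hχ, hx1s x hx χ]; exact zero_comp
  -- simplicity of s
  rcases hs.2.2 k m j μ θ hkH hmH hm with hk0 | hm0
  · -- IsZero k : c ≅ b, use simplicity of s'
    have hviso : IsIso v :=
      (Triangle.isZero₁_iff_isIso₂ _ hTc1).1 (isZero_shift_of_isZero hk0 1)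
    have hT3'' : Triangle.mk f (g ≫ v) (inv v ≫ δ) ∈ distTriang C := by
      refine isomorphic_distinguished _ hc _ ?_
      refine Triangle.isoMk _ _ (Iso.refl _) (Iso.refl _) (asIso v).symm ?_ ?_ ?_
      · dsimp; simp [Triangle.mk]
      · dsimp; simp [Triangle.mk]
      · dsimp; simp [Triangle.mk]
    rcases hs'.2.2 s (y'⟦(1 : ℤ)⟧) f (g ≫ v) (inv v ≫ δ) hs.1 hbH hT3'' with hs0 | hb0
    · exact absurd hs0 hs.2.1
    · have hc0 : IsZero c := by
        refine IsZero.of_iso hb0 (asIso v)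
      exact (Triangle.isZero₃_iff_isIso₁ _ hc).1 hc0
  · -- IsZero m : j iso, contradiction
    have hjiso : IsIso j := (Triangle.isZero₃_iff_isIso₁ _ hm).1 hm0
    exfalso
    apply hf
    rw [← id_comp f, ← IsIso.inv_hom_id j, assoc, hjf, comp_zero]

end Schur

section MkWrappers

variable {a d b W : C} {f : a ⟶ d} {g : d ⟶ b} {w : b ⟶ a⟦(1 : ℤ)⟧}

lemma mk_yoneda₂ (h : Triangle.mk f g w ∈ distTriang C) (φ : d ⟶ W) (hφ : f ≫ φ = 0) :
    ∃ ψ : b ⟶ W, φ = g ≫ ψ := Triangle.yoneda_exact₂ _ h φ hφ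

lemma mk_yoneda₃ (h : Triangle.mk f g w ∈ distTriang C) (φ : b ⟶ W) (hφ : g ≫ φ = 0) :
    ∃ ψ : (a⟦(1 : ℤ)⟧ : C) ⟶ W, φ = w ≫ ψ := Triangle.yoneda_exact₃ _ h φ hφ

lemma mk_coyoneda₂ (h : Triangle.mk f g w ∈ distTriang C) (φ : W ⟶ d) (hφ : φ ≫ g = 0) :
    ∃ ψ : W ⟶ a, φ = ψ ≫ f := Triangle.coyoneda_exact₂ _ h φ hφ

lemma mk_coyoneda₃ (h : Triangle.mk f g w ∈ distTriang C) (φ : W ⟶ b) (hφ : φ ≫ w = 0) :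
    ∃ ψ : W ⟶ d, φ = ψ ≫ g := Triangle.coyoneda_exact₃ _ h φ hφ

lemma mk_coyoneda₁ (h : Triangle.mk f g w ∈ distTriang C) (φ : W ⟶ (a⟦(1 : ℤ)⟧ : C))
    (hφ : φ ≫ (shiftFunctor C (1 : ℤ)).map f = 0) :
    ∃ ψ : W ⟶ b, φ = ψ ≫ w := Triangle.coyoneda_exact₁ _ h φ hφ

lemma mk_yoneda₁ (h : Triangle.mk f g w ∈ distTriang C) (φ : a ⟶ W)
    (hφ : w ≫ (shiftFunctor C (1 : ℤ)).map φ = 0) :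
    ∃ ψ : d ⟶ W, φ = f ≫ ψ := yoneda_exact₁' h φ hφ

lemma mk_complete₂ {a' d' b' : C} {f' : a' ⟶ d'} {g' : d' ⟶ b'} {w' : b' ⟶ a'⟦(1 : ℤ)⟧}
    (h : Triangle.mk f g w ∈ distTriang C) (h' : Triangle.mk f' g' w' ∈ distTriang C)
    (pa : a ⟶ a') (pc : b ⟶ b')
    (comm : w ≫ (shiftFunctor C (1 : ℤ)).map pa = pc ≫ w') :
    ∃ pb : d ⟶ d', f ≫ pb = pa ≫ f' ∧ g ≫ pc = pb ≫ g' :=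
  complete_distinguished_triangle_morphism₂ _ _ h h' pa pc comm

end MkWrappers

section Pieces

open ZeroObject

/-- extension closure preserves vanishing of maps into a fixed object. -/
lemma zhom_extP {U : Set C} {q : C} (h : ∀ p ∈ U, ZHom p q) :
    ∀ z, ExtClosureP U z → ZHom z q := by
  intro z hz
  induction hz with
  | of p hp => exact h p hp
  | zero z hz => exact ZHom.of_isZero_src hz
  | iso x y e hx ih => exact ih.of_src_iso e
  | ext a d b f g w htri ha hb iha ihb => exact zhom₂_contra htri iha ihb

variable {X Y S : Set C}

/-- the atomic pieces of objects of `K⟦1⟧`. -/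
def PieceSet (S X Y : Set C) : Set C :=
  {p | (∃ f' : C, f' ∈ rPerp S ∩ heart X Y ∧
      IsSimpleIn (star (rPerp S ∩ heart X Y) (shiftSet (extClosure S) (-1))) f' ∧
      Nonempty (((f')⟦(1 : ℤ)⟧ : C) ≅ p)) ∨
    (∃ s₀ ∈ S, Nonempty ((s₀ : C) ≅ p))}

variable (hT : IsTStructure X Y) (hS : S ⊆ simplesOf (heart X Y))

local notation "KK" => star (rPerp S ∩ heart X Y) (shiftSet (extClosure S) (-1))

include hT hS

lemma zeroF : (0 : C) ∈ rPerp S ∩ heart X Y := by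
  refine ⟨fun s hs f => (isZero_zero C).eq_of_tgt f 0, hT.zeroX _ (isZero_zero C), 0, ?_, ?_⟩
  · exact hT.zeroY _ (isZero_zero C)
  · exact ⟨(isZero_shift_of_isZero (isZero_zero C) 1).iso (isZero_zero C)⟩

lemma zeroS1 : (0 : C) ∈ shiftSet (extClosure S) (-1) :=
  ⟨0, ExtClosureP.zero _ (isZero_zero C),
    ⟨(isZero_shift_of_isZero (isZero_zero C) (-1)).iso (isZero_zero C)⟩⟩

lemma memF_K {f' : C} (hf' : f' ∈ rPerp S ∩ heart X Y) : f' ∈ KK :=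
  ⟨f', 0, 𝟙 f', 0, 0, hf', zeroS1 hT hS, contractible_distinguished f'⟩

lemma memS1_K {z : C} (hz : z ∈ shiftSet (extClosure S) (-1)) : z ∈ KK :=
  ⟨0, z, 0, 𝟙 z, 0, zeroF hT hS, hz, contractible_distinguished₁ z⟩

/-- the key vanishing: simples do not map to `f'⟦1⟧` for an `F`-type simple `f'` of `K`. -/
lemma keyV1 {s f' : C} (hs : s ∈ S) (hf' : f' ∈ rPerp S ∩ heart X Y)
    (hsimp : IsSimpleIn KK f') : ZHom s ((f')⟦(1 : ℤ)⟧) := by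
  intro φ
  by_contra hφ
  obtain ⟨E, u, v, hE⟩ := distinguished_cocone_triangle₂ φ
  have hEH : E ∈ heart X Y := heart_ext hT hE hf'.2 (hS hs).1
  have hErp : E ∈ rPerp S := by
    intro s' hs' η
    by_cases hχ : η ≫ v = 0
    · obtain ⟨ρ, hρ⟩ := Triangle.coyoneda_exact₂ _ hE η hχ
      rw [hρ, hf'.1 s' hs' ρ]; exact zero_comp
    · have hiso : IsIso (η ≫ v) := schur hT (hS hs') (hS hs) _ hχ
      exfalso
      apply hφ
      have hvφ : (η ≫ v) ≫ φ = 0 := by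
        rw [assoc, tri_zero₂₃ hE, comp_zero]
      rw [← id_comp φ, ← IsIso.inv_hom_id (η ≫ v), assoc, hvφ, comp_zero]
  have hEK : E ∈ KK := memF_K hT hS ⟨hErp, hEH⟩
  have hsK : ((s)⟦(-1 : ℤ)⟧ : C) ∈ KK :=
    memS1_K hT hS ⟨s, ExtClosureP.of s hs, ⟨Iso.refl _⟩⟩
  have hinv := inv_rot_of_distTriang _ hE
  rcases hsimp.2.2 _ _ _ _ _ hsK hEK hinv with h1 | h2
  · exact (hS hs).2.1 (isZero_of_isZero_shift (-1) h1)
  · have hφiso : IsIso φ := (Triangle.isZero₂_iff_isIso₃ _ hE).1 h2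
    have hi : f' ≅ ((s)⟦(-1 : ℤ)⟧ : C) :=
      (shiftEquiv C (1 : ℤ)).unitIso.app f' ≪≫ (shiftFunctor C (-1 : ℤ)).mapIso (asIso φ).symm
    have hi0 : hi.hom = 0 := tst_hom hT (heart_memX hT hf'.2) (heart_neg hT (hS hs).1) _
    have : IsZero f' := by
      rw [IsZero.iff_id_eq_zero, ← hi.hom_inv_id, hi0, zero_comp]
    exact hsimp.2.1 this

/-- transport of `K`-simplicity along isomorphisms. -/
lemma simple_iso {p q : C} (hq : q ∈ KK) (hp : IsSimpleIn KK p) (e : q ≅ p) :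
    IsSimpleIn KK q := by
  refine ⟨hq, fun h0 => hp.2.1 (IsZero.of_iso h0 e.symm), ?_⟩
  intro a b f g w ha hb htri
  refine hp.2.2 a b (f ≫ e.hom) (e.inv ≫ g) w ha hb ?_
  refine isomorphic_distinguished _ htri _ ?_
  refine Triangle.isoMk _ _ (Iso.refl _) e.symm (Iso.refl _) ?_ ?_ ?_
  · dsimp; simp [Triangle.mk]
  · dsimp; simp [Triangle.mk]
  · dsimp; simp [Triangle.mk]

/-- `K`-simples of torsion-free type are (shifted) elements of `S`. -/
lemma classS : ∀ x : C, ExtClosureP S x → ∀ p : C, IsSimpleIn KK p →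
    (((x)⟦(-1 : ℤ)⟧ : C) ≅ p) → ∃ s₀ ∈ S, Nonempty (((s₀ : C)⟦(-1 : ℤ)⟧ : C) ≅ p) := by
  intro x hx
  induction hx with
  | of s hs => exact fun p hp e => ⟨s, hs, ⟨e⟩⟩
  | zero z hz =>
    intro p hp e
    exact absurd (IsZero.of_iso (isZero_shift_of_isZero hz (-1)) e.symm) hp.2.1
  | iso x y e hx ih =>
    intro p hp e'
    exact ih p hp ((shiftFunctor C (-1 : ℤ)).mapIso e ≪≫ e')
  | ext a d b f g w htri ha hb iha ihb =>
    intro p hp e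
    obtain ⟨w', hsh⟩ := shift_triangle_dist f g w htri (-1)
    have htr2 : Triangle.mk ((shiftFunctor C (-1 : ℤ)).map f ≫ e.hom)
        (e.inv ≫ (shiftFunctor C (-1 : ℤ)).map g) w' ∈ distTriang C := by
      refine isomorphic_distinguished _ hsh _ ?_
      refine Triangle.isoMk _ _ (Iso.refl _) e.symm (Iso.refl _) ?_ ?_ ?_
      · dsimp; simp [Triangle.mk]
      · dsimp; simp [Triangle.mk]
      · dsimp; simp [Triangle.mk]
    have haK : ((a)⟦(-1 : ℤ)⟧ : C) ∈ KK := memS1_K hT hS ⟨a, ha, ⟨Iso.refl _⟩⟩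
    have hbK : ((b)⟦(-1 : ℤ)⟧ : C) ∈ KK := memS1_K hT hS ⟨b, hb, ⟨Iso.refl _⟩⟩
    rcases hp.2.2 _ _ _ _ _ haK hbK htr2 with h1 | h2
    · have : IsIso (e.inv ≫ (shiftFunctor C (-1 : ℤ)).map g) :=
        (Triangle.isZero₁_iff_isIso₂ _ htr2).1 h1
      exact ihb p hp (asIso (e.inv ≫ (shiftFunctor C (-1 : ℤ)).map g)).symm
    · have : IsIso ((shiftFunctor C (-1 : ℤ)).map f ≫ e.hom) :=
        (Triangle.isZero₃_iff_isIso₁ _ htr2).1 h2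
      exact iha p hp (asIso ((shiftFunctor C (-1 : ℤ)).map f ≫ e.hom))

/-- classification of the shifted simples of `K`. -/
lemma classPieces {p : C} (hp : IsSimpleIn KK p) : ((p)⟦(1 : ℤ)⟧ : C) ∈ PieceSet S X Y := by
  obtain ⟨fp, zp, a, b, w, hfp, hzp, htri⟩ := hp.1
  rcases hp.2.2 _ _ _ _ _ (memF_K hT hS hfp) (memS1_K hT hS hzp) htri with h1 | h2
  · -- fp is zero : p ≅ zp, torsion-free type
    have hbiso : IsIso b := (Triangle.isZero₁_iff_isIso₂ _ htri).1 h1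
    obtain ⟨x, hx, ⟨e2⟩⟩ := hzp
    obtain ⟨s₀, hs₀, ⟨e3⟩⟩ := classS hT hS x hx p hp (e2 ≪≫ (asIso b).symm)
    right
    refine ⟨s₀, hs₀, ⟨?_⟩⟩
    exact ((shiftEquiv C (1 : ℤ)).counitIso.app s₀).symm ≪≫ (shiftFunctor C (1 : ℤ)).mapIso e3
  · -- zp is zero : p ≅ fp, F-type
    have haiso : IsIso a := (Triangle.isZero₃_iff_isIso₁ _ htri).1 h2
    left
    refine ⟨fp, hfp, simple_iso hT hS (memF_K hT hS hfp) hp (asIso a), ⟨?_⟩⟩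
    exact (shiftFunctor C (1 : ℤ)).mapIso (asIso a)

/-- objects of `K⟦1⟧` lie in the extension closure of the pieces. -/
lemma memCL {e : C} (he : ExtClosureP (simplesOf KK) e) :
    ExtClosureP (PieceSet S X Y) ((e)⟦(1 : ℤ)⟧ : C) := by
  induction he with
  | of p hp => exact ExtClosureP.of _ (classPieces hT hS hp)
  | zero z hz => exact ExtClosureP.zero _ (isZero_shift_of_isZero hz 1)
  | iso x y e hx ih => exact ExtClosureP.iso _ _ ((shiftFunctor C (1 : ℤ)).mapIso e) ih
  | ext a d b f g w htri ha hb iha ihb =>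
    obtain ⟨w', hsh⟩ := shift_triangle_dist f g w htri 1
    exact ExtClosureP.ext _ _ _ _ _ _ hsh iha ihb

/-- vanishing into negatively shifted pieces. -/
lemma pieceNeg {p : C} (hp : p ∈ PieceSet S X Y) {s : C} (hs : s ∈ S) :
    ZHom s ((p)⟦(-1 : ℤ)⟧) := by
  rcases hp with ⟨f', hf', _, ⟨e⟩⟩ | ⟨s₀, hs₀, ⟨e⟩⟩
  · refine ZHom.of_tgt_iso (b' := f') ?_ (fun g => hf'.1 s hs g)
    exact ((shiftFunctor C (-1 : ℤ)).mapIso e).symm ≪≫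
      ((shiftEquiv C (1 : ℤ)).unitIso.app f').symm
  · refine ZHom.of_tgt_iso (b' := (s₀ : C)⟦(-1 : ℤ)⟧) ?_ ?_
    · exact ((shiftFunctor C (-1 : ℤ)).mapIso e).symm
    · exact tst_hom hT (heart_memX hT (hS hs).1) (heart_neg hT (hS hs₀).1)

/-- vanishing into negatively shifted `CL`-objects. -/
lemma clNeg : ∀ D : C, ExtClosureP (PieceSet S X Y) D → ∀ s ∈ S, ZHom s ((D)⟦(-1 : ℤ)⟧) := by
  intro D hD
  induction hD with
  | of p hp => exact fun s hs => pieceNeg hT hS hp hs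
  | zero z hz => exact fun s hs => ZHom.of_isZero_tgt (isZero_shift_of_isZero hz (-1))
  | iso x y e hx ih =>
    exact fun s hs => ZHom.of_tgt_iso ((shiftFunctor C (-1 : ℤ)).mapIso e).symm (ih s hs)
  | ext a d b f g w htri ha hb iha ihb =>
    intro s hs
    obtain ⟨w', hsh⟩ := shift_triangle_dist f g w htri (-1)
    exact zhom₂_co hsh (iha s hs) (ihb s hs)

end Pieces

section Cover

open ZeroObject

variable {X Y S : Set C}

/-- a cover of `B` by an object of the extension closure of `S`,
with degree-0 surjectivity and degree-1 injectivity on tests from `extClosure S`. -/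
def GoodCover (S : Set C) (B : C) : Prop :=
  ∃ (t : C) (lam : t ⟶ B), ExtClosureP S t ∧
    (∀ z : C, ExtClosureP S z → ∀ ψ : z ⟶ B, ∃ ζ : z ⟶ t, ζ ≫ lam = ψ) ∧
    (∀ z : C, ExtClosureP S z → ∀ κ : z ⟶ ((t)⟦(1 : ℤ)⟧ : C),
      κ ≫ (shiftFunctor C (1 : ℤ)).map lam = 0 → κ = 0)

lemma GoodCover.of_iso {B B' : C} (h : GoodCover S B) (e : B ≅ B') : GoodCover S B' := by
  obtain ⟨t, lam, htS, cov, inj⟩ := h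
  refine ⟨t, lam ≫ e.hom, htS, ?_, ?_⟩
  · intro z hz ψ
    obtain ⟨ζ, hζ⟩ := cov z hz (ψ ≫ e.inv)
    exact ⟨ζ, by rw [← assoc, hζ, assoc, e.inv_hom_id, comp_id]⟩
  · intro z hz κ hκ
    refine inj z hz κ ?_
    have : κ ≫ (shiftFunctor C (1 : ℤ)).map (lam ≫ e.hom) ≫
        (shiftFunctor C (1 : ℤ)).map e.inv = 0 := by rw [← assoc, hκ, zero_comp]
    rw [← Functor.map_comp, assoc, e.hom_inv_id, comp_id] at this
    exact this

lemma GoodCover.of_isZero {B : C} (h : IsZero B) : GoodCover S B := by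
  refine ⟨B, 𝟙 B, ExtClosureP.zero _ h, ?_, ?_⟩
  · exact fun z hz ψ => ⟨ψ, comp_id ψ⟩
  · intro z hz κ _
    exact (isZero_shift_of_isZero h 1).eq_of_tgt κ 0

variable (hT : IsTStructure X Y) (hS : S ⊆ simplesOf (heart X Y))

include hT hS

/-- the lifting lemma : if a composite `χ ≫ w` lies in the image of `lam⟦1⟧`, then either
`χ = 0` or `w` itself does. -/
lemma wlift {B t : C} {lam : t ⟶ B}
    (cov : ∀ z : C, ExtClosureP S z → ∀ ψ : z ⟶ B, ∃ ζ : z ⟶ t, ζ ≫ lam = ψ)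
    (inj : ∀ z : C, ExtClosureP S z → ∀ κ : z ⟶ ((t)⟦(1 : ℤ)⟧ : C),
      κ ≫ (shiftFunctor C (1 : ℤ)).map lam = 0 → κ = 0)
    {s₀ : C} (hs₀ : s₀ ∈ S) (w : s₀ ⟶ ((B)⟦(1 : ℤ)⟧ : C)) :
    ∀ z : C, ExtClosureP S z → ∀ (χ : z ⟶ s₀) (c : z ⟶ ((t)⟦(1 : ℤ)⟧ : C)),
      χ ≫ w = c ≫ (shiftFunctor C (1 : ℤ)).map lam →
      χ = 0 ∨ ∃ w' : s₀ ⟶ ((t)⟦(1 : ℤ)⟧ : C), w' ≫ (shiftFunctor C (1 : ℤ)).map lam = w := by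
  intro z hz
  induction hz with
  | of s hs =>
    intro χ c heq
    by_cases hχ : χ = 0
    · exact Or.inl hχ
    · have hiso : IsIso χ := schur hT (hS hs) (hS hs₀) χ hχ
      refine Or.inr ⟨inv χ ≫ c, ?_⟩
      rw [assoc, ← heq, ← assoc, IsIso.inv_hom_id, id_comp]
  | zero z hz => exact fun χ c _ => Or.inl (hz.eq_of_src χ 0)
  | iso x y e hx ih =>
    intro χ c heq
    rcases ih (e.hom ≫ χ) (e.hom ≫ c) (by rw [assoc, assoc, heq]) with h | h
    · refine Or.inl ?_
      rw [← id_comp χ, ← e.inv_hom_id, assoc, h, comp_zero]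
    · exact Or.inr h
  | ext z₁ z z₂ f g ρ htri h₁ h₂ ih₁ ih₂ =>
    intro χ c heq
    rcases ih₁ (f ≫ χ) (f ≫ c) (by rw [assoc, assoc, heq]) with h | h
    · -- f ≫ χ = 0 : descend
      obtain ⟨χ₂, hχ₂⟩ := mk_yoneda₂ htri χ h
      have hfc : (f ≫ c) ≫ (shiftFunctor C (1 : ℤ)).map lam = 0 := by
        rw [assoc, ← heq, ← assoc, h, zero_comp]
      have hfc0 : f ≫ c = 0 := inj z₁ h₁ _ hfc
      obtain ⟨c₂, hc₂⟩ := mk_yoneda₂ htri c hfc0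
      -- m₂ := χ₂ ≫ w - c₂ ≫ lam⟦1⟧
      have hm2 : g ≫ (χ₂ ≫ w - c₂ ≫ (shiftFunctor C (1 : ℤ)).map lam) = 0 := by
        rw [Preadditive.comp_sub, ← assoc, ← assoc, ← hχ₂, ← hc₂, heq, sub_self]
      obtain ⟨m₁, hm₁⟩ := mk_yoneda₃ htri _ hm2
      obtain ⟨m₀, hm₀⟩ := (shiftFunctor C (1 : ℤ)).map_surjective m₁
      obtain ⟨ζ₁, hζ₁⟩ := cov z₁ h₁ m₀
      have heq2 : χ₂ ≫ w = (c₂ + ρ ≫ (shiftFunctor C (1 : ℤ)).map ζ₁) ≫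
          (shiftFunctor C (1 : ℤ)).map lam := by
        have : χ₂ ≫ w - c₂ ≫ (shiftFunctor C (1 : ℤ)).map lam =
            ρ ≫ (shiftFunctor C (1 : ℤ)).map ζ₁ ≫ (shiftFunctor C (1 : ℤ)).map lam := by
          rw [hm₁, ← hm₀, ← Functor.map_comp, hζ₁]
        rw [Preadditive.add_comp, assoc, ← this, add_sub_cancel]
      rcases ih₂ χ₂ _ heq2 with h' | h'
      · refine Or.inl ?_
        rw [hχ₂, h', comp_zero]
      · exact Or.inr h'
    · exact Or.inr h

end Cover

section Main

open ZeroObject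

variable {X Y S : Set C}

variable (hT : IsTStructure X Y) (hS : S ⊆ simplesOf (heart X Y))

include hT hS

/-- the main induction: a good cover propagates through extensions by objects of `CL`. -/
lemma mainInduction : ∀ D : C, ExtClosureP (PieceSet S X Y) D →
    ∀ (B Y' : C) (ι : B ⟶ Y') (π : Y' ⟶ D) (w : D ⟶ ((B)⟦(1 : ℤ)⟧ : C)),
    Triangle.mk ι π w ∈ (distTriang C) → GoodCover S B → GoodCover S Y' := by
  intro D hD
  induction hD with
  | of p hp =>
    intro B Y' ι π w htri hB
    obtain ⟨t, lam, htS, cov, inj⟩ := hB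
    rcases hp with ⟨f', hf', hf'simp, ⟨ep⟩⟩ | ⟨s₀, hs₀, ⟨es⟩⟩
    · -- F-type piece
      have hZp : ∀ z : C, ExtClosureP S z → ZHom z p := by
        intro z hz
        refine zhom_extP (fun s hs => ZHom.of_tgt_iso ep.symm ?_) z hz
        exact keyV1 hT hS hs hf' hf'simp
      refine ⟨t, lam ≫ ι, htS, ?_, ?_⟩
      · intro z hz ψ
        obtain ⟨ψB, hψB⟩ := mk_coyoneda₂ htri ψ (hZp z hz _)
        obtain ⟨ζ, hζ⟩ := cov z hz ψB
        exact ⟨ζ, by rw [← assoc, hζ, ← hψB]⟩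
      · intro z hz κ hκ
        have h2 : (κ ≫ (shiftFunctor C (1 : ℤ)).map lam) ≫
            (shiftFunctor C (1 : ℤ)).map ι = 0 := by
          rw [assoc, ← Functor.map_comp]; exact hκ
        obtain ⟨h₀, hh₀⟩ := mk_coyoneda₁ htri _ h2
        refine inj z hz κ ?_
        rw [hh₀, hZp z hz h₀, zero_comp]
    · -- S-type piece : transport the triangle to have third object s₀
      have htri' : Triangle.mk ι (π ≫ es.inv) (es.hom ≫ w) ∈ distTriang C := by
        refine isomorphic_distinguished _ htri _ ?_
        refine Triangle.isoMk _ _ (Iso.refl _) (Iso.refl _) es ?_ ?_ ?_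
        · dsimp; simp [Triangle.mk]
        · dsimp; simp [Triangle.mk]
        · dsimp; simp [Triangle.mk]
      set π' : Y' ⟶ s₀ := π ≫ es.inv with hπ'
      set w2 : s₀ ⟶ ((B)⟦(1 : ℤ)⟧ : C) := es.hom ≫ w with hw2
      by_cases hcase : ∃ wt : s₀ ⟶ ((t)⟦(1 : ℤ)⟧ : C),
        wt ≫ (shiftFunctor C (1 : ℤ)).map lam = w2
      · -- case (I) : the attaching map lifts to the cover
        obtain ⟨wt, hwt⟩ := hcase
        obtain ⟨tY, u, v, htY⟩ := distinguished_cocone_triangle₂ wt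
        have htYS : ExtClosureP S tY :=
          ExtClosureP.ext t tY s₀ u v wt htY htS (ExtClosureP.of s₀ hs₀)
        obtain ⟨lamY, hsq1, hsq2⟩ := mk_complete₂ htY htri' lam (𝟙 s₀)
          (by rw [id_comp, hwt])
        rw [comp_id] at hsq2
        refine ⟨tY, lamY, htYS, ?_, ?_⟩
        · -- cover
          intro z hz ψ
          have hχw : (ψ ≫ π') ≫ w2 = 0 := by
            rw [assoc, tri_zero₂₃ htri', comp_zero]
          have hχwt : (ψ ≫ π') ≫ wt = 0 := by
            refine inj z hz _ ?_
            rw [assoc, hwt]; exact hχw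
          obtain ⟨c, hc⟩ := mk_coyoneda₃ htY (ψ ≫ π') hχwt
          have hd : (ψ - c ≫ lamY) ≫ π' = 0 := by
            rw [Preadditive.sub_comp, assoc, ← hsq2, ← hc, sub_self]
          obtain ⟨ψB, hψB⟩ := mk_coyoneda₂ htri' _ hd
          obtain ⟨ζ, hζ⟩ := cov z hz ψB
          refine ⟨c + ζ ≫ u, ?_⟩
          rw [Preadditive.add_comp, assoc, hsq1, ← assoc, hζ, ← hψB, add_sub_cancel]
        · -- injectivity
          intro z hz κ hκ
          have hb : κ ≫ (shiftFunctor C (1 : ℤ)).map v = 0 := by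
            have hv : (shiftFunctor C (1 : ℤ)).map v =
                (shiftFunctor C (1 : ℤ)).map lamY ≫ (shiftFunctor C (1 : ℤ)).map π' := by
              rw [← Functor.map_comp, hsq2]
            rw [hv, ← assoc, hκ, zero_comp]
          obtain ⟨w1', hsh⟩ := shift_triangle_dist u v wt htY 1
          obtain ⟨κB, hκB⟩ := mk_coyoneda₂ hsh κ hb
          have h3 : (κB ≫ (shiftFunctor C (1 : ℤ)).map lam) ≫
              (shiftFunctor C (1 : ℤ)).map ι = 0 := by
            rw [assoc, ← Functor.map_comp, ← hsq1, Functor.map_comp, ← assoc, ← hκB]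
            exact hκ
          obtain ⟨h₀, hh₀⟩ := mk_coyoneda₁ htri' _ h3
          have h4 : (κB - h₀ ≫ wt) ≫ (shiftFunctor C (1 : ℤ)).map lam = 0 := by
            rw [Preadditive.sub_comp, assoc, hwt, ← hh₀, sub_self]
          have h5 : κB = h₀ ≫ wt := sub_eq_zero.mp (inj z hz _ h4)
          rw [hκB, h5, assoc, tri_zero₃₁ htY, comp_zero]
      · -- case (II) : no lift, the cover is unchanged
        refine ⟨t, lam ≫ ι, htS, ?_, ?_⟩
        · intro z hz ψ
          have hχw : (ψ ≫ π') ≫ w2 = 0 := by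
            rw [assoc, tri_zero₂₃ htri', comp_zero]
          rcases wlift hT hS cov inj hs₀ w2 z hz (ψ ≫ π') 0
            (by rw [hχw, zero_comp]) with h | h
          · obtain ⟨ψB, hψB⟩ := mk_coyoneda₂ htri' ψ h
            obtain ⟨ζ, hζ⟩ := cov z hz ψB
            exact ⟨ζ, by rw [← assoc, hζ, ← hψB]⟩
          · exact absurd h hcase
        · intro z hz κ hκ
          have h2 : (κ ≫ (shiftFunctor C (1 : ℤ)).map lam) ≫
              (shiftFunctor C (1 : ℤ)).map ι = 0 := by
            rw [assoc, ← Functor.map_comp]; exact hκ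
          obtain ⟨h₀, hh₀⟩ := mk_coyoneda₁ htri' _ h2
          rcases wlift hT hS cov inj hs₀ w2 z hz h₀ κ hh₀.symm with h | h
          · refine inj z hz κ ?_
            rw [hh₀, h, zero_comp]
          · exact absurd h hcase
  | zero D hD0 =>
    intro B Y' ι π w htri hB
    have : IsIso ι := (Triangle.isZero₃_iff_isIso₁ _ htri).1 hD0
    exact hB.of_iso (asIso ι)
  | iso x y e hx ih =>
    intro B Y' ι π w htri hB
    have htri'' : Triangle.mk ι (π ≫ e.inv) (e.hom ≫ w) ∈ distTriang C := by
      refine isomorphic_distinguished _ htri _ ?_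
      refine Triangle.isoMk _ _ (Iso.refl _) (Iso.refl _) e ?_ ?_ ?_
      · dsimp; simp [Triangle.mk]
      · dsimp; simp [Triangle.mk]
      · dsimp; simp [Triangle.mk]
    exact ih B Y' ι (π ≫ e.inv) (e.hom ≫ w) htri'' hB
  | ext D₁ D D₂ α β ρ htriD h₁ h₂ ih₁ ih₂ =>
    intro B Y' ι π w htri hB
    obtain ⟨Y₁, ι₁, π₁, hT₁⟩ := distinguished_cocone_triangle₂ (α ≫ w)
    have hGood₁ : GoodCover S Y₁ := ih₁ B Y₁ ι₁ π₁ (α ≫ w) hT₁ hB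
    obtain ⟨Yh, ιh, γh, hTYh⟩ := distinguished_cocone_triangle₁ (π ≫ β)
    obtain ⟨ν, hν1, hν2⟩ := mk_complete₂ hT₁ htri (𝟙 B) α (by simp)
    rw [id_comp] at hν1
    have hνπ₂ : ν ≫ (π ≫ β) = 0 := by
      rw [← assoc, ← hν2, assoc, tri_zero₁₂ htriD, comp_zero]
    obtain ⟨νh, hνh⟩ := mk_coyoneda₂ hTYh ν hνπ₂
    obtain ⟨t₁, lam₁, ht₁S, cov₁, inj₁⟩ := hGood₁
    -- vanishing into `D₂⟦-1⟧` and `D⟦-1⟧`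
    have hz2 : ∀ z : C, ExtClosureP S z → ZHom z ((D₂)⟦(-1 : ℤ)⟧) := fun z hz =>
      zhom_extP (fun s hs => clNeg hT hS D₂ h₂ s hs) z hz
    have hzD : ∀ z : C, ExtClosureP S z → ZHom z ((D)⟦(-1 : ℤ)⟧) := fun z hz =>
      zhom_extP (fun s hs => clNeg hT hS D (ExtClosureP.ext _ _ _ _ _ _ htriD h₁ h₂) s hs) z hz
    -- surjectivity of `ν` on tests
    have hsurj : ∀ z : C, ExtClosureP S z → ∀ ψ : z ⟶ Y', ψ ≫ (π ≫ β) = 0 →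
        ∃ ψ₁ : z ⟶ Y₁, ψ₁ ≫ ν = ψ := by
      intro z hz ψ hψ
      rw [← assoc] at hψ
      obtain ⟨hD₁, hhD₁⟩ := mk_coyoneda₂ htriD (ψ ≫ π) hψ
      have hw₁ : hD₁ ≫ (α ≫ w) = 0 := by
        rw [← assoc, ← hhD₁, assoc, tri_zero₂₃ htri, comp_zero]
      obtain ⟨ψ₁', hψ₁'⟩ := mk_coyoneda₃ hT₁ hD₁ hw₁
      have hdiff : (ψ - ψ₁' ≫ ν) ≫ π = 0 := by
        rw [Preadditive.sub_comp, assoc, ← hν2, ← assoc, ← hψ₁', ← hhD₁, sub_self]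
      obtain ⟨ψB, hψB⟩ := mk_coyoneda₂ htri _ hdiff
      refine ⟨ψ₁' + ψB ≫ ι₁, ?_⟩
      rw [Preadditive.add_comp, assoc, hν1, ← hψB]
      abel
    -- injectivity of `ν` on tests
    have hinj : ∀ z : C, ExtClosureP S z → ∀ ψ₁ : z ⟶ Y₁, ψ₁ ≫ ν = 0 → ψ₁ = 0 := by
      intro z hz ψ₁ hψ₁
      have h1 : (ψ₁ ≫ π₁) ≫ α = 0 := by
        rw [assoc, hν2, ← assoc, hψ₁, zero_comp]
      obtain ⟨ξ, hξ⟩ := Triangle.coyoneda_exact₂ _ (inv_rot_of_distTriang _ htriD)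
        (ψ₁ ≫ π₁) h1
      have hξ0 : ξ = 0 := hz2 z hz ξ
      have hψπ : ψ₁ ≫ π₁ = 0 := hξ.trans (by rw [hξ0]; exact zero_comp)
      obtain ⟨ψB, hψB⟩ := mk_coyoneda₂ hT₁ ψ₁ hψπ
      have hB0 : ψB ≫ ι = 0 := by
        rw [← hν1, ← assoc, ← hψB, hψ₁]
      obtain ⟨ξ', hξ'⟩ := Triangle.coyoneda_exact₂ _ (inv_rot_of_distTriang _ htri) ψB hB0
      have hξ'0 : ξ' = 0 := hzD z hz ξ'
      rw [hψB, hξ', hξ'0, zero_comp]; exact zero_comp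
    -- the good cover of `Yh`
    have hGoodYh : GoodCover S Yh := by
      refine ⟨t₁, lam₁ ≫ νh, ht₁S, ?_, ?_⟩
      · intro z hz ψ'
        have h0 : (ψ' ≫ ιh) ≫ (π ≫ β) = 0 := by
          rw [assoc, tri_zero₁₂ hTYh, comp_zero]
        obtain ⟨ψ₁, hψ₁⟩ := hsurj z hz (ψ' ≫ ιh) h0
        obtain ⟨ζ, hζ⟩ := cov₁ z hz ψ₁
        refine ⟨ζ, ?_⟩
        have hd : (ζ ≫ (lam₁ ≫ νh) - ψ') ≫ ιh = 0 := by
          rw [Preadditive.sub_comp, assoc, assoc, ← hνh, ← assoc, hζ, hψ₁, sub_self]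
        obtain ⟨ξ, hξ⟩ := Triangle.coyoneda_exact₂ _ (inv_rot_of_distTriang _ hTYh) _ hd
        have hξ0 : ξ = 0 := hz2 z hz ξ
        have : ζ ≫ (lam₁ ≫ νh) - ψ' = 0 := by rw [hξ, hξ0]; exact zero_comp
        exact sub_eq_zero.mp this
      · -- injectivity via the extension trick
        intro z hz κ hκ
        obtain ⟨E, iκ, pκ, hE⟩ := distinguished_cocone_triangle₂ κ
        have hES : ExtClosureP S E := ExtClosureP.ext t₁ E z iκ pκ κ hE ht₁S hz
        obtain ⟨Λh, hΛh⟩ := mk_yoneda₁ hE (lam₁ ≫ νh) hκ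
        have h1 : (Λh ≫ ιh) ≫ (π ≫ β) = 0 := by
          rw [assoc, tri_zero₁₂ hTYh, comp_zero]
        obtain ⟨Λ₁, hΛ₁⟩ := hsurj E hES (Λh ≫ ιh) h1
        have h2 : (iκ ≫ Λ₁ - lam₁) ≫ ν = 0 := by
          rw [Preadditive.sub_comp, assoc, hΛ₁, ← assoc, ← hΛh, hνh, assoc, sub_self]
        have h3 : iκ ≫ Λ₁ = lam₁ := sub_eq_zero.mp (hinj t₁ ht₁S (iκ ≫ Λ₁ - lam₁) h2)
        refine inj₁ z hz κ ?_
        rw [← h3, Functor.map_comp, ← assoc, tri_zero₃₁ hE, zero_comp]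
    exact ih₂ Yh Y' ιh (π ≫ β) γh hTYh hGoodYh

end Main

/-- if the right simple tilt `K = (S^⊥ ∩ H) * ⟨S⟩[-1]` of a length heart
is again a length heart, then every object of `K[1]` admits a right `⟨S⟩`-approximation. -/
theorem approx_of_length_tilt (k : Type*) [Field k] [Linear k C]
    [∀ x y : C, Module.Finite k (x ⟶ y)] [IsIdempotentComplete C]
    {X Y : Set C} (hXY : IsLengthHeart X Y)
    {S : Set C} (hS : S ⊆ simplesOf (heart X Y))
    (hK : HeartIsLength (star (rPerp S ∩ heart X Y) (shiftSet (extClosure S) (-1)))) :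
    ∀ d ∈ shiftSet (star (rPerp S ∩ heart X Y) (shiftSet (extClosure S) (-1))) 1,
      HasRightApprox (extClosure S) d := by
  open ZeroObject in
  intro d hd
  obtain ⟨hTst, hBdd, hLen⟩ := hXY
  obtain ⟨e, heK, ⟨eiso⟩⟩ := hd
  have heCL := hK heK
  have hdCL : ExtClosureP (PieceSet S X Y) d :=
    ExtClosureP.iso _ _ eiso (memCL hTst hS heCL)
  have hGood : GoodCover S d := by
    refine mainInduction hTst hS d hdCL 0 d 0 (𝟙 d) 0 ?_
      (GoodCover.of_isZero (Limits.isZero_zero C))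
    exact contractible_distinguished₁ d
  obtain ⟨t, lam, htS, cov, inj⟩ := hGood
  exact ⟨t, lam, htS, fun x' hx' g => cov x' hx' g⟩

end SMPaper
end
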